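/- arXiv:1405.5479 — 2 statements merged into one kernel-verified Lean document; each statement's English description precedes it below -/
import Mathlib

section
/- Let q be a power of an odd prime, let G ⊆ UT_{2n}(F_{q^k}) be a pattern group with algebra 𝔤, and let † be an algebra anti-involution of 𝔤 with (α e_{ij})† ∈ F_{q^k}^× e_{\bar j \bar i} (where \bar i = 2n+1−i). Set U = {u ∈ G : u† = u⁻¹}, H = {diag(h, h̃⁻¹) ∈ U : diag(h, I) ∈ G}, and N = {I + e : e strictly upper-right block, I + e ∈ U}. Then N is an abelian normal subgroup of U, H is a subgroup of U isomorphic to a pattern subgroup of UT_n via diag(h, h̃⁻¹) ↦ h, and U = N ⋊ H as an internal semidirect product. -/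
open scoped Classical Matrix

noncomputable section

/-- `2n × 2n` matrices indexed by `Fin n ⊕ Fin n`. -/
abbrev M2 (E : Type) (n : ℕ) : Type := Matrix (Fin n ⊕ Fin n) (Fin n ⊕ Fin n) E

/-- The position of an index in the linear order on `[2n]`. -/
def idx2 {n : ℕ} : Fin n ⊕ Fin n → ℕ :=
  Sum.elim Fin.val (fun j => n + j.val)

/-- The map `i ↦ 2n + 1 - i` on indices. -/
def bar2 {n : ℕ} : Fin n ⊕ Fin n → Fin n ⊕ Fin n :=
  Sum.elim (fun i => Sum.inr i.rev) (fun j => Sum.inl j.rev)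

/-- The pattern algebra `𝔤`: strictly upper-triangular matrices supported on the pattern `P`. -/
def patAlg (E : Type) [Field E] (n : ℕ) (P : Fin n ⊕ Fin n → Fin n ⊕ Fin n → Prop) :
    Set (M2 E n) :=
  {x | ∀ i j, x i j ≠ 0 → (P i j ∧ idx2 i < idx2 j)}

/-- The pattern group `G = 1 + 𝔤` at the level of matrices. -/
def patGrpM (E : Type) [Field E] (n : ℕ) (P : Fin n ⊕ Fin n → Fin n ⊕ Fin n → Prop) :
    Set (M2 E n) :=
  {x | (∀ i, x i i = 1) ∧ ∀ i j, i ≠ j → x i j ≠ 0 → (P i j ∧ idx2 i < idx2 j)}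

/-- The pattern group `G` as a set of units. -/
def patGrp (E : Type) [Field E] (n : ℕ) (P : Fin n ⊕ Fin n → Fin n ⊕ Fin n → Prop) :
    Set (M2 E n)ˣ :=
  {u | (u : M2 E n) ∈ patGrpM E n P}

/-- The group `U = {u ∈ G : u† = u⁻¹}` defined by the anti-involution `x ↦ d x`,
where `u† = 1 + d (u - 1)`. -/
def Ugrp (E : Type) [Field E] (n : ℕ) (P : Fin n ⊕ Fin n → Fin n ⊕ Fin n → Prop)
    (d : M2 E n → M2 E n) : Set (M2 E n)ˣ :=
  {u | u ∈ patGrp E n P ∧ (1 + d ((u : M2 E n) - 1)) * (u : M2 E n) = 1}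

/-- The abelian normal subgroup `N` of `U`: elements that are the identity outside of the
upper-right `n × n` block. -/
def Ngrp (E : Type) [Field E] (n : ℕ) (P : Fin n ⊕ Fin n → Fin n ⊕ Fin n → Prop)
    (d : M2 E n → M2 E n) : Set (M2 E n)ˣ :=
  {u | u ∈ Ugrp E n P d ∧ ∃ x : Matrix (Fin n) (Fin n) E,
    (u : M2 E n) = Matrix.fromBlocks 1 x 0 1}

/-- The subgroup `H = {diag(h, h̃⁻¹) : diag(h, I) ∈ G}`, where `h̃` is defined by
`diag(I, h̃) = diag(h, I)†`. -/
def Hgrp (E : Type) [Field E] (n : ℕ) (P : Fin n ⊕ Fin n → Fin n ⊕ Fin n → Prop)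
    (d : M2 E n → M2 E n) : Set (M2 E n)ˣ :=
  {u | ∃ h ht : Matrix (Fin n) (Fin n) E,
    (u : M2 E n) = Matrix.fromBlocks h 0 0 ht ∧
    Matrix.fromBlocks h 0 0 1 ∈ patGrpM E n P ∧
    (1 + d (Matrix.fromBlocks (h - 1) 0 0 0)) * Matrix.fromBlocks 1 0 0 ht = 1}

namespace UAI

open Matrix Finset

variable {E : Type} [Field E] {n : ℕ} {P : Fin n ⊕ Fin n → Fin n ⊕ Fin n → Prop}
  {d : M2 E n → M2 E n}

lemma bar2_bar2 (i : Fin n ⊕ Fin n) : bar2 (bar2 i) = i := by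
  cases i <;> simp [bar2]

lemma idx2_lt (j : Fin n ⊕ Fin n) : idx2 j < 2 * n := by
  cases j with
  | inl a => have := a.isLt; simp only [idx2, Sum.elim_inl]; omega
  | inr a => have := a.isLt; simp only [idx2, Sum.elim_inr]; omega

/-! ### The pattern algebra -/

lemma A_zero : (0 : M2 E n) ∈ patAlg E n P := by
  intro i j h; simp at h

lemma A_supp {x y : M2 E n} (hx : x ∈ patAlg E n P)
    (h : ∀ i j, y i j ≠ 0 → x i j ≠ 0) : y ∈ patAlg E n P :=
  fun i j hy => hx i j (h i j hy)

lemma A_neg {x : M2 E n} (hx : x ∈ patAlg E n P) : -x ∈ patAlg E n P := by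
  refine A_supp hx fun i j h => ?_
  simpa using h

lemma A_add {x y : M2 E n} (hx : x ∈ patAlg E n P) (hy : y ∈ patAlg E n P) :
    x + y ∈ patAlg E n P := by
  intro i j h
  by_cases h1 : x i j = 0
  · exact hy i j (by simpa [Matrix.add_apply, h1] using h)
  · exact hx i j h1

lemma A_mul (hPtrans : ∀ i j l, P i j → P j l → P i l) {x y : M2 E n}
    (hx : x ∈ patAlg E n P) (hy : y ∈ patAlg E n P) : x * y ∈ patAlg E n P := by
  intro i j h
  rw [Matrix.mul_apply] at h
  obtain ⟨l, -, hl⟩ := Finset.exists_ne_zero_of_sum_ne_zero h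
  have h1 := hx i l (left_ne_zero_of_mul hl)
  have h2 := hy l j (right_ne_zero_of_mul hl)
  exact ⟨hPtrans _ _ _ h1.1 h2.1, h1.2.trans h2.2⟩

lemma A_sum {ι : Type*} {s : Finset ι} {f : ι → M2 E n}
    (h : ∀ i ∈ s, f i ∈ patAlg E n P) : ∑ i ∈ s, f i ∈ patAlg E n P := by
  classical
  induction s using Finset.induction with
  | empty => simpa using (A_zero (E := E) (n := n) (P := P))
  | @insert a s hns ih =>
      rw [Finset.sum_insert hns]
      exact A_add (h _ (Finset.mem_insert_self _ _))
        (ih fun i hi => h i (Finset.mem_insert_of_mem hi))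

lemma A_pow (hPtrans : ∀ i j l, P i j → P j l → P i l) {x : M2 E n}
    (hx : x ∈ patAlg E n P) : ∀ m : ℕ, 1 ≤ m → x ^ m ∈ patAlg E n P := by
  intro m
  induction m with
  | zero => omega
  | succ k ih =>
      intro _
      rcases Nat.eq_zero_or_pos k with hk | hk
      · subst hk; simpa [pow_one] using hx
      · rw [pow_succ]; exact A_mul hPtrans (ih hk) hx

/-! ### Basic properties of `d` -/

lemma d_zero (hdadd : ∀ x ∈ patAlg E n P, ∀ y ∈ patAlg E n P, d (x + y) = d x + d y) :
    d 0 = 0 := by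
  have h := hdadd 0 A_zero 0 A_zero
  rw [add_zero] at h
  exact (left_eq_add.mp h)

lemma d_neg (hdadd : ∀ x ∈ patAlg E n P, ∀ y ∈ patAlg E n P, d (x + y) = d x + d y)
    {x : M2 E n} (hx : x ∈ patAlg E n P) : d (-x) = -d x := by
  have h := hdadd x hx (-x) (A_neg hx)
  rw [add_neg_cancel, d_zero hdadd] at h
  exact eq_neg_iff_add_eq_zero.mpr (by rw [add_comm]; exact h.symm)

lemma d_sum (hdadd : ∀ x ∈ patAlg E n P, ∀ y ∈ patAlg E n P, d (x + y) = d x + d y)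
    {ι : Type*} {s : Finset ι} {f : ι → M2 E n}
    (h : ∀ i ∈ s, f i ∈ patAlg E n P) : d (∑ i ∈ s, f i) = ∑ i ∈ s, d (f i) := by
  classical
  induction s using Finset.induction with
  | empty => simpa using d_zero hdadd
  | @insert a s hns ih =>
      rw [Finset.sum_insert hns, Finset.sum_insert hns,
        hdadd _ (h _ (Finset.mem_insert_self _ _))
          _ (A_sum fun i hi => h i (Finset.mem_insert_of_mem hi)),
        ih fun i hi => h i (Finset.mem_insert_of_mem hi)]

lemma d_pow (hPtrans : ∀ i j l, P i j → P j l → P i l)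
    (hdmul : ∀ x ∈ patAlg E n P, ∀ y ∈ patAlg E n P, d (x * y) = d y * d x)
    {x : M2 E n} (hx : x ∈ patAlg E n P) :
    ∀ m : ℕ, 1 ≤ m → d (x ^ m) = (d x) ^ m := by
  intro m
  induction m with
  | zero => omega
  | succ k ih =>
      intro _
      rcases Nat.eq_zero_or_pos k with hk | hk
      · subst hk; simp [pow_one]
      · rw [pow_succ, hdmul _ (A_pow hPtrans hx k hk) _ hx, ih hk, pow_succ']

/-! ### The support of `d x` -/

lemma d_supp (hdadd : ∀ x ∈ patAlg E n P, ∀ y ∈ patAlg E n P, d (x + y) = d x + d y)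
    (hdentry : ∀ i j, P i j → idx2 i < idx2 j → ∀ α : E, α ≠ 0 →
      ∃ β : E, β ≠ 0 ∧ d (Matrix.single i j α) =
        Matrix.single (bar2 j) (bar2 i) β)
    {x : M2 E n} (hx : x ∈ patAlg E n P) {i j : Fin n ⊕ Fin n}
    (h : d x i j ≠ 0) : x (bar2 j) (bar2 i) ≠ 0 := by
  classical
  have hmem : ∀ p : (Fin n ⊕ Fin n) × (Fin n ⊕ Fin n),
      Matrix.single p.1 p.2 (x p.1 p.2) ∈ patAlg E n P := by
    intro p a b hab
    have h1 : ¬¬(p.1 = a ∧ p.2 = b) := fun hc => hab (Matrix.single_apply_of_ne _ _ _ _ _ hc)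
    obtain ⟨rfl, rfl⟩ := not_not.mp h1
    rw [Matrix.single_apply_same] at hab
    exact hx _ _ hab
  have hxeq : x = ∑ p : (Fin n ⊕ Fin n) × (Fin n ⊕ Fin n),
      Matrix.single p.1 p.2 (x p.1 p.2) := by
    ext a b
    rw [Matrix.sum_apply]
    rw [Finset.sum_eq_single ((a, b) : (Fin n ⊕ Fin n) × (Fin n ⊕ Fin n))]
    · rw [Matrix.single_apply_same]
    · intro p _ hp
      exact Matrix.single_apply_of_ne _ _ _ _ _
        (fun hc => hp (Prod.ext hc.1 hc.2))
    · intro hm; exact absurd (Finset.mem_univ _) hm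
  have hdx : d x = ∑ p : (Fin n ⊕ Fin n) × (Fin n ⊕ Fin n),
      d (Matrix.single p.1 p.2 (x p.1 p.2)) := by
    conv_lhs => rw [hxeq]
    exact d_sum hdadd fun p _ => hmem p
  rw [hdx, Matrix.sum_apply] at h
  obtain ⟨p, -, hp⟩ := Finset.exists_ne_zero_of_sum_ne_zero h
  have hxp : x p.1 p.2 ≠ 0 := by
    intro h0
    rw [h0] at hp
    rw [Matrix.single_zero, d_zero hdadd] at hp
    simp at hp
  obtain ⟨hP, hlt⟩ := hx _ _ hxp
  obtain ⟨β, hβ, hdF⟩ := hdentry p.1 p.2 hP hlt _ hxp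
  rw [hdF] at hp
  have h2 : ¬¬(bar2 p.2 = i ∧ bar2 p.1 = j) :=
    fun hc => hp (Matrix.single_apply_of_ne _ _ _ _ _ hc)
  obtain ⟨h2, h3⟩ := not_not.mp h2
  rw [← h2, ← h3, bar2_bar2, bar2_bar2]
  exact hxp

/-! ### Nilpotency and inverses via geometric series -/

lemma pow_entry_le {x : M2 E n} (hx : x ∈ patAlg E n P) :
    ∀ (m : ℕ) (i j : Fin n ⊕ Fin n), (x ^ m) i j ≠ 0 → idx2 i + m ≤ idx2 j := by
  intro m
  induction m with
  | zero =>
      intro i j h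
      rw [pow_zero] at h
      have : i = j := by
        by_contra hij
        rw [Matrix.one_apply_ne hij] at h
        exact h rfl
      subst this; omega
  | succ k ih =>
      intro i j h
      rw [pow_succ, Matrix.mul_apply] at h
      obtain ⟨l, -, hl⟩ := Finset.exists_ne_zero_of_sum_ne_zero h
      have h1 := ih i l (left_ne_zero_of_mul hl)
      have h2 := (hx l j (right_ne_zero_of_mul hl)).2
      omega

lemma pow_nilpotent {x : M2 E n} (hx : x ∈ patAlg E n P) : x ^ (2 * n) = 0 := by
  ext i j
  rw [Matrix.zero_apply]
  by_contra h
  have h1 := pow_entry_le hx (2 * n) i j h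
  have h2 := idx2_lt (n := n) j
  omega

/-- The strictly-triangular part of the inverse of `1 + x`. -/
def ng {E : Type} [Field E] {n : ℕ} (x : M2 E n) : M2 E n :=
  ∑ m ∈ Finset.Ico 1 (2 * n + 1), (-x) ^ m

lemma ng_mem (hPtrans : ∀ i j l, P i j → P j l → P i l) {x : M2 E n}
    (hx : x ∈ patAlg E n P) : ng x ∈ patAlg E n P :=
  A_sum fun m hm => A_pow hPtrans (A_neg hx) m (Finset.mem_Ico.mp hm).1

lemma ng_inv (hPtrans : ∀ i j l, P i j → P j l → P i l) {x : M2 E n}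
    (hx : x ∈ patAlg E n P) :
    (1 + ng x) * (1 + x) = 1 ∧ (1 + x) * (1 + ng x) = 1 := by
  have hz : (-x) ^ (2 * n + 1) = 0 := by
    rw [pow_succ, pow_nilpotent (A_neg hx), zero_mul]
  have h1 : (1 : M2 E n) + ng x = ∑ m ∈ Finset.range (2 * n + 1), (-x) ^ m := by
    rw [Finset.range_eq_Ico, Finset.sum_eq_sum_Ico_succ_bot (by omega)]
    rw [pow_zero, ng]
  have h2 := geom_sum_mul (-x) (2 * n + 1)
  rw [hz, zero_sub] at h2
  have hx1 : (-x - 1 : M2 E n) = -(1 + x) := by abel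
  rw [hx1, mul_neg] at h2
  have h3 : (∑ m ∈ Finset.range (2 * n + 1), (-x) ^ m) * (1 + x) = 1 := neg_injective h2
  rw [← h1] at h3
  exact ⟨h3, mul_eq_one_comm.mp h3⟩

lemma d_ng (hPtrans : ∀ i j l, P i j → P j l → P i l)
    (hdadd : ∀ x ∈ patAlg E n P, ∀ y ∈ patAlg E n P, d (x + y) = d x + d y)
    (hdmul : ∀ x ∈ patAlg E n P, ∀ y ∈ patAlg E n P, d (x * y) = d y * d x)
    {x : M2 E n} (hx : x ∈ patAlg E n P) : d (ng x) = ng (d x) := by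
  rw [ng, d_sum hdadd fun m hm => A_pow hPtrans (A_neg hx) m (Finset.mem_Ico.mp hm).1, ng]
  refine Finset.sum_congr rfl fun m hm => ?_
  rw [d_pow hPtrans hdmul (A_neg hx) m (Finset.mem_Ico.mp hm).1, d_neg hdadd hx]

/-! ### `1 + 𝔤` and the pattern group -/

lemma memA_of_memG {x : M2 E n} (hx : x ∈ patGrpM E n P) : x - 1 ∈ patAlg E n P := by
  intro i j h
  by_cases hij : i = j
  · subst hij
    rw [Matrix.sub_apply, hx.1 i, Matrix.one_apply_eq, sub_self] at h
    exact absurd rfl h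
  · refine hx.2 i j hij ?_
    intro h0
    rw [Matrix.sub_apply, Matrix.one_apply_ne hij, sub_zero] at h
    exact h h0

lemma memG_of_memA {e : M2 E n} (he : e ∈ patAlg E n P) : 1 + e ∈ patGrpM E n P := by
  have hdiag : ∀ i, e i i = 0 := by
    intro i
    by_contra h
    exact absurd (he i i h).2 (lt_irrefl _)
  constructor
  · intro i
    rw [Matrix.add_apply, Matrix.one_apply_eq, hdiag, add_zero]
  · intro i j hij h
    refine he i j ?_
    rwa [Matrix.add_apply, Matrix.one_apply_ne hij, zero_add] at h

lemma G_one : (1 : M2 E n) ∈ patGrpM E n P := by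
  have := memG_of_memA (A_zero (E := E) (n := n) (P := P))
  rwa [add_zero] at this

lemma G_mul (hPtrans : ∀ i j l, P i j → P j l → P i l) {x y : M2 E n}
    (hx : x ∈ patGrpM E n P) (hy : y ∈ patGrpM E n P) : x * y ∈ patGrpM E n P := by
  have hxy : x * y = 1 + ((x - 1) + (y - 1) + (x - 1) * (y - 1)) := by noncomm_ring
  rw [hxy]
  exact memG_of_memA (A_add (A_add (memA_of_memG hx) (memA_of_memG hy))
    (A_mul hPtrans (memA_of_memG hx) (memA_of_memG hy)))

/-! ### The group `U` -/

lemma U_one (hdadd : ∀ x ∈ patAlg E n P, ∀ y ∈ patAlg E n P, d (x + y) = d x + d y) :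
    (1 : (M2 E n)ˣ) ∈ Ugrp E n P d := by
  refine ⟨?_, ?_⟩
  · show ((1 : (M2 E n)ˣ) : M2 E n) ∈ patGrpM E n P
    rw [Units.val_one]; exact G_one
  · rw [Units.val_one, sub_self, d_zero hdadd, add_zero, one_mul]

lemma U_inv_coe {u : (M2 E n)ˣ} (hu : u ∈ Ugrp E n P d) :
    (↑u⁻¹ : M2 E n) = 1 + d ((↑u : M2 E n) - 1) := by
  calc (↑u⁻¹ : M2 E n) = 1 * ↑u⁻¹ := (one_mul _).symm
    _ = ((1 + d ((↑u : M2 E n) - 1)) * ↑u) * ↑u⁻¹ := by rw [hu.2]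
    _ = (1 + d ((↑u : M2 E n) - 1)) * (↑u * ↑u⁻¹) := by rw [mul_assoc]
    _ = 1 + d ((↑u : M2 E n) - 1) := by rw [u.mul_inv, mul_one]

lemma U_mul (hPtrans : ∀ i j l, P i j → P j l → P i l)
    (hdadd : ∀ x ∈ patAlg E n P, ∀ y ∈ patAlg E n P, d (x + y) = d x + d y)
    (hdmul : ∀ x ∈ patAlg E n P, ∀ y ∈ patAlg E n P, d (x * y) = d y * d x)
    {u v : (M2 E n)ˣ} (hu : u ∈ Ugrp E n P d) (hv : v ∈ Ugrp E n P d) :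
    u * v ∈ Ugrp E n P d := by
  have hA : (↑u : M2 E n) - 1 ∈ patAlg E n P := memA_of_memG hu.1
  have hB : (↑v : M2 E n) - 1 ∈ patAlg E n P := memA_of_memG hv.1
  constructor
  · show ((u * v : (M2 E n)ˣ) : M2 E n) ∈ patGrpM E n P
    rw [Units.val_mul]; exact G_mul hPtrans hu.1 hv.1
  · rw [Units.val_mul]
    have key : d ((↑u : M2 E n) * ↑v - 1) =
        d ((↑v : M2 E n) - 1) * d ((↑u : M2 E n) - 1) +
          (d ((↑u : M2 E n) - 1) + d ((↑v : M2 E n) - 1)) := by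
      have h1 : (↑u : M2 E n) * ↑v - 1 =
          ((↑u : M2 E n) - 1) * ((↑v : M2 E n) - 1) + (((↑u : M2 E n) - 1) + ((↑v : M2 E n) - 1)) := by
        noncomm_ring
      rw [h1, hdadd _ (A_mul hPtrans hA hB) _ (A_add hA hB), hdmul _ hA _ hB,
        hdadd _ hA _ hB]
    have hfac : (1 : M2 E n) + d ((↑u : M2 E n) * ↑v - 1) =
        (1 + d ((↑v : M2 E n) - 1)) * (1 + d ((↑u : M2 E n) - 1)) := by
      rw [key]; noncomm_ring
    rw [hfac, mul_assoc, ← mul_assoc (1 + d ((↑u : M2 E n) - 1)), hu.2, one_mul, hv.2]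

lemma U_inv (hdmem : ∀ x ∈ patAlg E n P, d x ∈ patAlg E n P)
    (hdinvol : ∀ x ∈ patAlg E n P, d (d x) = x)
    {u : (M2 E n)ˣ} (hu : u ∈ Ugrp E n P d) : u⁻¹ ∈ Ugrp E n P d := by
  have hA : (↑u : M2 E n) - 1 ∈ patAlg E n P := memA_of_memG hu.1
  have hco : (↑u⁻¹ : M2 E n) = 1 + d ((↑u : M2 E n) - 1) := U_inv_coe hu
  have hsub : (↑u⁻¹ : M2 E n) - 1 = d ((↑u : M2 E n) - 1) := by rw [hco]; abel
  constructor
  · show (↑u⁻¹ : M2 E n) ∈ patGrpM E n P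
    rw [hco]; exact memG_of_memA (hdmem _ hA)
  · rw [hsub, hdinvol _ hA]
    have : (1 : M2 E n) + ((↑u : M2 E n) - 1) = ↑u := by abel
    rw [this, u.mul_inv]
/-! ### Block matrices -/

/-- Embedding into the upper-left block. -/
def e11 {E : Type} [Field E] {n : ℕ} (y : Matrix (Fin n) (Fin n) E) : M2 E n :=
  Matrix.fromBlocks y 0 0 0

/-- Embedding into the upper-right block. -/
def e12 {E : Type} [Field E] {n : ℕ} (y : Matrix (Fin n) (Fin n) E) : M2 E n :=
  Matrix.fromBlocks 0 y 0 0

/-- Embedding into the lower-right block. -/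
def e22 {E : Type} [Field E] {n : ℕ} (y : Matrix (Fin n) (Fin n) E) : M2 E n :=
  Matrix.fromBlocks 0 0 0 y

section blocks

variable (a b : Matrix (Fin n) (Fin n) E)

lemma e11_mul_e11 : e11 a * e11 b = e11 (a * b) := by simp [e11, Matrix.fromBlocks_multiply]
lemma e11_mul_e12 : e11 a * e12 b = e12 (a * b) := by simp [e11, e12, Matrix.fromBlocks_multiply]
lemma e11_mul_e22 : e11 a * e22 b = 0 := by
  simp [e11, e22, Matrix.fromBlocks_multiply, ← Matrix.fromBlocks_zero]
lemma e12_mul_e12 : e12 a * e12 b = 0 := by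
  simp [e12, Matrix.fromBlocks_multiply, ← Matrix.fromBlocks_zero]
lemma e12_mul_e22 : e12 a * e22 b = e12 (a * b) := by simp [e12, e22, Matrix.fromBlocks_multiply]
lemma e12_mul_e11 : e12 a * e11 b = 0 := by
  simp [e11, e12, Matrix.fromBlocks_multiply, ← Matrix.fromBlocks_zero]
lemma e22_mul_e22 : e22 a * e22 b = e22 (a * b) := by simp [e22, Matrix.fromBlocks_multiply]
lemma e22_mul_e11 : e22 a * e11 b = 0 := by
  simp [e11, e22, Matrix.fromBlocks_multiply, ← Matrix.fromBlocks_zero]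
lemma e22_mul_e12 : e22 a * e12 b = 0 := by
  simp [e12, e22, Matrix.fromBlocks_multiply, ← Matrix.fromBlocks_zero]

lemma e11_add : e11 a + e11 b = e11 (a + b) := by simp [e11, Matrix.fromBlocks_add]
lemma e12_add : e12 a + e12 b = e12 (a + b) := by simp [e12, Matrix.fromBlocks_add]
lemma e22_add : e22 a + e22 b = e22 (a + b) := by simp [e22, Matrix.fromBlocks_add]
lemma e11_neg : -e11 a = e11 (-a) := by simp [e11, Matrix.fromBlocks_neg]
lemma e12_neg : -e12 a = e12 (-a) := by simp [e12, Matrix.fromBlocks_neg]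
lemma e22_neg : -e22 a = e22 (-a) := by simp [e22, Matrix.fromBlocks_neg]

lemma fb_sub (x y z w x' y' z' w' : Matrix (Fin n) (Fin n) E) :
    Matrix.fromBlocks x y z w - Matrix.fromBlocks x' y' z' w' =
      Matrix.fromBlocks (x - x') (y - y') (z - z') (w - w') := by
  rw [sub_eq_add_neg, Matrix.fromBlocks_neg, Matrix.fromBlocks_add]
  simp [sub_eq_add_neg]

lemma one_add_blocks (x y z : Matrix (Fin n) (Fin n) E) :
    (1 : M2 E n) + e11 x + e12 y + e22 z = Matrix.fromBlocks (1 + x) y 0 (1 + z) := by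
  rw [← Matrix.fromBlocks_one, e11, e12, e22, Matrix.fromBlocks_add, Matrix.fromBlocks_add,
    Matrix.fromBlocks_add]
  congr 1 <;> simp

lemma one_add_e11_add_e22 (x z : Matrix (Fin n) (Fin n) E) :
    (1 : M2 E n) + e11 x + e22 z = Matrix.fromBlocks (1 + x) 0 0 (1 + z) := by
  have := one_add_blocks (E := E) x 0 z
  rw [e12] at this
  rw [← this, Matrix.fromBlocks_zero, add_zero]

lemma one_add_e12 (y : Matrix (Fin n) (Fin n) E) :
    (1 : M2 E n) + e12 y = Matrix.fromBlocks 1 y 0 1 := by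
  have := one_add_blocks (E := E) 0 y 0
  rw [e11, e22] at this
  simpa using this

lemma one_add_e22 (z : Matrix (Fin n) (Fin n) E) :
    (1 : M2 E n) + e22 z = Matrix.fromBlocks 1 0 0 (1 + z) := by
  have := one_add_e11_add_e22 (E := E) 0 z
  rw [e11, Matrix.fromBlocks_zero] at this
  simpa using this

lemma one_add_e11 (x : Matrix (Fin n) (Fin n) E) :
    (1 : M2 E n) + e11 x = Matrix.fromBlocks (1 + x) 0 0 1 := by
  have := one_add_e11_add_e22 (E := E) x 0
  rw [e22, Matrix.fromBlocks_zero] at this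
  simpa using this

lemma blocks_decomp (x y z : Matrix (Fin n) (Fin n) E) :
    Matrix.fromBlocks x y 0 z = 1 + e11 (x - 1) + e12 y + e22 (z - 1) := by
  rw [one_add_blocks, show (1 : Matrix (Fin n) (Fin n) E) + (x - 1) = x from by abel,
    show (1 : Matrix (Fin n) (Fin n) E) + (z - 1) = z from by abel]

lemma e11_pow : ∀ (m : ℕ), 1 ≤ m → (e11 a) ^ m = e11 (a ^ m) := by
  intro m
  induction m with
  | zero => omega
  | succ k ih =>
      intro _
      rcases Nat.eq_zero_or_pos k with hk | hk
      · subst hk; simp [pow_one]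
      · rw [pow_succ, pow_succ, ih hk, e11_mul_e11]

lemma e22_pow : ∀ (m : ℕ), 1 ≤ m → (e22 a) ^ m = e22 (a ^ m) := by
  intro m
  induction m with
  | zero => omega
  | succ k ih =>
      intro _
      rcases Nat.eq_zero_or_pos k with hk | hk
      · subst hk; simp [pow_one]
      · rw [pow_succ, pow_succ, ih hk, e22_mul_e22]

/-- The `n × n` analogue of `ng`. -/
def ngn {E : Type} [Field E] {n : ℕ} (y : Matrix (Fin n) (Fin n) E) : Matrix (Fin n) (Fin n) E :=
  ∑ m ∈ Finset.Ico 1 (2 * n + 1), (-y) ^ m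

lemma ng_e11 : ng (e11 a) = e11 (ngn a) := by
  rw [ng, ngn]
  rw [show ∑ m ∈ Finset.Ico 1 (2 * n + 1), (-e11 a) ^ m
      = ∑ m ∈ Finset.Ico 1 (2 * n + 1), e11 ((-a) ^ m) from
    Finset.sum_congr rfl fun m hm => by
      rw [e11_neg] at *; exact e11_pow (-a) m (Finset.mem_Ico.mp hm).1]
  exact (map_sum (AddMonoidHom.mk' (e11 (E := E) (n := n))
    (fun x y => (e11_add x y).symm)) _ _).symm

lemma ng_e22 : ng (e22 a) = e22 (ngn a) := by
  rw [ng, ngn]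
  rw [show ∑ m ∈ Finset.Ico 1 (2 * n + 1), (-e22 a) ^ m
      = ∑ m ∈ Finset.Ico 1 (2 * n + 1), e22 ((-a) ^ m) from
    Finset.sum_congr rfl fun m hm => by
      rw [e22_neg] at *; exact e22_pow (-a) m (Finset.mem_Ico.mp hm).1]
  exact (map_sum (AddMonoidHom.mk' (e22 (E := E) (n := n))
    (fun x y => (e22_add x y).symm)) _ _).symm

end blocks
/-! ### Behaviour of `d` on blocks -/

section dblocks

variable (hdadd : ∀ x ∈ patAlg E n P, ∀ y ∈ patAlg E n P, d (x + y) = d x + d y)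
  (hdentry : ∀ i j, P i j → idx2 i < idx2 j → ∀ α : E, α ≠ 0 →
    ∃ β : E, β ≠ 0 ∧ d (Matrix.single i j α) =
      Matrix.single (bar2 j) (bar2 i) β)

include hdadd hdentry

lemma d_e11_eq {y : Matrix (Fin n) (Fin n) E} (hy : e11 y ∈ patAlg E n P) :
    d (e11 y) = e22 (Matrix.toBlocks₂₂ (d (e11 y))) := by
  ext i j
  cases i with
  | inl a =>
      cases j with
      | inl b =>
          rw [show (e22 (Matrix.toBlocks₂₂ (d (e11 y)))) (Sum.inl a) (Sum.inl b) = 0 from by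
            simp [e22]]
          by_contra h
          have := d_supp hdadd hdentry hy h
          simp [bar2, e11] at this
      | inr b =>
          rw [show (e22 (Matrix.toBlocks₂₂ (d (e11 y)))) (Sum.inl a) (Sum.inr b) = 0 from by
            simp [e22]]
          by_contra h
          have := d_supp hdadd hdentry hy h
          simp [bar2, e11] at this
  | inr a =>
      cases j with
      | inl b =>
          rw [show (e22 (Matrix.toBlocks₂₂ (d (e11 y)))) (Sum.inr a) (Sum.inl b) = 0 from by
            simp [e22]]
          by_contra h
          have := d_supp hdadd hdentry hy h
          simp [bar2, e11] at this
      | inr b => simp [e22, Matrix.toBlocks₂₂]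

lemma d_e22_eq {y : Matrix (Fin n) (Fin n) E} (hy : e22 y ∈ patAlg E n P) :
    d (e22 y) = e11 (Matrix.toBlocks₁₁ (d (e22 y))) := by
  ext i j
  cases i with
  | inl a =>
      cases j with
      | inl b => simp [e11, Matrix.toBlocks₁₁]
      | inr b =>
          rw [show (e11 (Matrix.toBlocks₁₁ (d (e22 y)))) (Sum.inl a) (Sum.inr b) = 0 from by
            simp [e11]]
          by_contra h
          have := d_supp hdadd hdentry hy h
          simp [bar2, e22] at this
  | inr a =>
      cases j with
      | inl b =>
          rw [show (e11 (Matrix.toBlocks₁₁ (d (e22 y)))) (Sum.inr a) (Sum.inl b) = 0 from by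
            simp [e11]]
          by_contra h
          have := d_supp hdadd hdentry hy h
          simp [bar2, e22] at this
      | inr b =>
          rw [show (e11 (Matrix.toBlocks₁₁ (d (e22 y)))) (Sum.inr a) (Sum.inr b) = 0 from by
            simp [e11]]
          by_contra h
          have := d_supp hdadd hdentry hy h
          simp [bar2, e22] at this

lemma d_e12_eq {y : Matrix (Fin n) (Fin n) E} (hy : e12 y ∈ patAlg E n P) :
    d (e12 y) = e12 (Matrix.toBlocks₁₂ (d (e12 y))) := by
  ext i j
  cases i with
  | inl a =>
      cases j with
      | inl b =>
          rw [show (e12 (Matrix.toBlocks₁₂ (d (e12 y)))) (Sum.inl a) (Sum.inl b) = 0 from by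
            simp [e12]]
          by_contra h
          have := d_supp hdadd hdentry hy h
          simp [bar2, e12] at this
      | inr b => simp [e12, Matrix.toBlocks₁₂]
  | inr a =>
      cases j with
      | inl b =>
          rw [show (e12 (Matrix.toBlocks₁₂ (d (e12 y)))) (Sum.inr a) (Sum.inl b) = 0 from by
            simp [e12]]
          by_contra h
          have := d_supp hdadd hdentry hy h
          simp [bar2, e12] at this
      | inr b =>
          rw [show (e12 (Matrix.toBlocks₁₂ (d (e12 y)))) (Sum.inr a) (Sum.inr b) = 0 from by
            simp [e12]]
          by_contra h
          have := d_supp hdadd hdentry hy h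
          simp [bar2, e12] at this

end dblocks

/-! ### Membership of block restrictions -/

lemma e11_toBlocks_mem {x : M2 E n} (hx : x ∈ patAlg E n P) :
    e11 (Matrix.toBlocks₁₁ x) ∈ patAlg E n P := by
  refine A_supp hx fun i j h => ?_
  cases i <;> cases j <;> simp [e11, Matrix.toBlocks₁₁] at h ⊢ <;> exact h

lemma e12_toBlocks_mem {x : M2 E n} (hx : x ∈ patAlg E n P) :
    e12 (Matrix.toBlocks₁₂ x) ∈ patAlg E n P := by
  refine A_supp hx fun i j h => ?_
  cases i <;> cases j <;> simp [e12, Matrix.toBlocks₁₂] at h ⊢ <;> exact h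

lemma e22_toBlocks_mem {x : M2 E n} (hx : x ∈ patAlg E n P) :
    e22 (Matrix.toBlocks₂₂ x) ∈ patAlg E n P := by
  refine A_supp hx fun i j h => ?_
  cases i <;> cases j <;> simp [e22, Matrix.toBlocks₂₂] at h ⊢ <;> exact h

lemma toB11_sub_one (x : M2 E n) :
    Matrix.toBlocks₁₁ (x - 1) = Matrix.toBlocks₁₁ x - 1 := by
  ext i j
  simp [Matrix.toBlocks₁₁, Matrix.sub_apply, Matrix.one_apply]

lemma toB22_sub_one (x : M2 E n) :
    Matrix.toBlocks₂₂ (x - 1) = Matrix.toBlocks₂₂ x - 1 := by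
  ext i j
  simp [Matrix.toBlocks₂₂, Matrix.sub_apply, Matrix.one_apply]

lemma toB12_sub_one (x : M2 E n) :
    Matrix.toBlocks₁₂ (x - 1) = Matrix.toBlocks₁₂ x := by
  ext i j
  simp [Matrix.toBlocks₁₂, Matrix.sub_apply, Matrix.one_apply]

/-! ### Two-sided inverses built from blocks -/

lemma block_inv (hPtrans : ∀ i j l, P i j → P j l → P i l)
    {x y : Matrix (Fin n) (Fin n) E}
    (hx : e11 x ∈ patAlg E n P) (hy : e22 y ∈ patAlg E n P) :
    (1 + ng (e11 x) + e22 y) * (1 + e11 x + ng (e22 y)) = 1 ∧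
    (1 + e11 x + ng (e22 y)) * (1 + ng (e11 x) + e22 y) = 1 := by
  set X := e11 x with hX
  set Y := e22 y with hY
  have hngX : ng X = e11 (ngn x) := ng_e11 x
  have hngY : ng Y = e22 (ngn y) := ng_e22 y
  have z1 : ng X * ng Y = 0 := by rw [hngX, hngY, e11_mul_e22]
  have z2 : Y * X = 0 := by rw [hX, hY, e22_mul_e11]
  have z3 : X * Y = 0 := by rw [hX, hY, e11_mul_e22]
  have z4 : ng Y * ng X = 0 := by rw [hngX, hngY, e22_mul_e11]
  have h1 := (ng_inv hPtrans hx).1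
  have h2 := (ng_inv hPtrans hx).2
  have h3 := (ng_inv hPtrans hy).1
  have h4 := (ng_inv hPtrans hy).2
  have h1' : X + ng X + ng X * X = 0 := by
    have h : (1 : M2 E n) + X + ng X + ng X * X = 1 := by
      have hh : (1 : M2 E n) + X + ng X + ng X * X = (1 + ng X) * (1 + X) := by noncomm_ring
      rw [hh, h1]
    calc X + ng X + ng X * X = (1 + X + ng X + ng X * X) - 1 := by abel
      _ = 0 := by rw [h]; exact sub_self 1
  have h2' : X + ng X + X * ng X = 0 := by
    have h : (1 : M2 E n) + X + ng X + X * ng X = 1 := by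
      have hh : (1 : M2 E n) + X + ng X + X * ng X = (1 + X) * (1 + ng X) := by noncomm_ring
      rw [hh, h2]
    calc X + ng X + X * ng X = (1 + X + ng X + X * ng X) - 1 := by abel
      _ = 0 := by rw [h]; exact sub_self 1
  have h3' : Y + ng Y + ng Y * Y = 0 := by
    have h : (1 : M2 E n) + Y + ng Y + ng Y * Y = 1 := by
      have hh : (1 : M2 E n) + Y + ng Y + ng Y * Y = (1 + ng Y) * (1 + Y) := by noncomm_ring
      rw [hh, h3]
    calc Y + ng Y + ng Y * Y = (1 + Y + ng Y + ng Y * Y) - 1 := by abel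
      _ = 0 := by rw [h]; exact sub_self 1
  have h4' : Y + ng Y + Y * ng Y = 0 := by
    have h : (1 : M2 E n) + Y + ng Y + Y * ng Y = 1 := by
      have hh : (1 : M2 E n) + Y + ng Y + Y * ng Y = (1 + Y) * (1 + ng Y) := by noncomm_ring
      rw [hh, h4]
    calc Y + ng Y + Y * ng Y = (1 + Y + ng Y + Y * ng Y) - 1 := by abel
      _ = 0 := by rw [h]; exact sub_self 1
  constructor
  · have expand : (1 + ng X + Y) * (1 + X + ng Y) =
        1 + X + ng Y + ng X + ng X * X + ng X * ng Y + Y + Y * X + Y * ng Y := by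
      noncomm_ring
    rw [expand, z1, z2]
    calc 1 + X + ng Y + ng X + ng X * X + 0 + Y + 0 + Y * ng Y
        = 1 + (X + ng X + ng X * X) + (Y + ng Y + Y * ng Y) := by abel
      _ = 1 := by rw [h1', h4']; abel
  · have expand : (1 + X + ng Y) * (1 + ng X + Y) =
        1 + ng X + Y + X + X * ng X + X * Y + ng Y + ng Y * ng X + ng Y * Y := by
      noncomm_ring
    rw [expand, z3, z4]
    calc 1 + ng X + Y + X + X * ng X + 0 + ng Y + 0 + ng Y * Y
        = 1 + (X + ng X + X * ng X) + (Y + ng Y + ng Y * Y) := by abel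
      _ = 1 := by rw [h2', h3']; abel
/-! ### Block structure of pattern group elements -/

lemma G_blocks {x : M2 E n} (hx : x ∈ patGrpM E n P) :
    x = Matrix.fromBlocks (Matrix.toBlocks₁₁ x) (Matrix.toBlocks₁₂ x) 0
      (Matrix.toBlocks₂₂ x) := by
  have h21 : Matrix.toBlocks₂₁ x = 0 := by
    ext i j
    rw [Matrix.zero_apply]
    by_contra h
    have hne : (Sum.inr i : Fin n ⊕ Fin n) ≠ Sum.inl j := by simp
    have := (hx.2 _ _ hne h).2
    have hj := j.isLt
    simp only [idx2, Sum.elim_inl, Sum.elim_inr] at this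
    omega
  conv_lhs => rw [← Matrix.fromBlocks_toBlocks x]
  rw [h21]

/-! ### Structure of elements of `H` -/

section Hsec

variable (hPtrans : ∀ i j l, P i j → P j l → P i l)
  (hdmem : ∀ x ∈ patAlg E n P, d x ∈ patAlg E n P)
  (hdadd : ∀ x ∈ patAlg E n P, ∀ y ∈ patAlg E n P, d (x + y) = d x + d y)
  (hdmul : ∀ x ∈ patAlg E n P, ∀ y ∈ patAlg E n P, d (x * y) = d y * d x)
  (hdinvol : ∀ x ∈ patAlg E n P, d (d x) = x)
  (hdentry : ∀ i j, P i j → idx2 i < idx2 j → ∀ α : E, α ≠ 0 →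
    ∃ β : E, β ≠ 0 ∧ d (Matrix.single i j α) =
      Matrix.single (bar2 j) (bar2 i) β)

include hPtrans hdmem hdadd hdmul hdinvol hdentry

lemma H_struct {u : (M2 E n)ˣ} (hu : u ∈ Hgrp E n P d) :
    ∃ h k : Matrix (Fin n) (Fin n) E,
      e11 (h - 1) ∈ patAlg E n P ∧
      Matrix.fromBlocks h 0 0 1 ∈ patGrpM E n P ∧
      d (e11 (h - 1)) = e22 k ∧
      e22 k ∈ patAlg E n P ∧
      (↑u : M2 E n) = 1 + e11 (h - 1) + ng (e22 k) ∧
      (↑u⁻¹ : M2 E n) = 1 + ng (e11 (h - 1)) + e22 k ∧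
      u ∈ Ugrp E n P d ∧
      Matrix.toBlocks₁₁ (↑u : M2 E n) = h := by
  obtain ⟨h, ht, hco, hD, hcond⟩ := hu
  have he1 : e11 (h - 1) ∈ patAlg E n P := by
    have hmem := memA_of_memG hD
    have heq : Matrix.fromBlocks h 0 0 1 - 1 = e11 (h - 1) := by
      rw [show (1 : M2 E n) = Matrix.fromBlocks 1 0 0 1 from Matrix.fromBlocks_one.symm,
        fb_sub, e11]
      simp
    rwa [heq] at hmem
  set κ := d (e11 (h - 1)) with hκdef
  have hκA : κ ∈ patAlg E n P := hdmem _ he1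
  have hκ22 : κ = e22 (Matrix.toBlocks₂₂ κ) := d_e11_eq hdadd hdentry he1
  set k := Matrix.toBlocks₂₂ κ with hkdef
  have hk22A : e22 k ∈ patAlg E n P := by rw [← hκ22]; exact hκA
  have hcond' : (1 + κ) * (Matrix.fromBlocks 1 0 0 ht) = 1 := hcond
  have hFht : Matrix.fromBlocks 1 0 0 ht = 1 + ng κ := by
    have hinv := ng_inv hPtrans hκA
    calc Matrix.fromBlocks (1 : Matrix (Fin n) (Fin n) E) 0 0 ht
        = ((1 + ng κ) * (1 + κ)) * Matrix.fromBlocks 1 0 0 ht := by rw [hinv.1, one_mul]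
      _ = (1 + ng κ) * ((1 + κ) * Matrix.fromBlocks 1 0 0 ht) := by rw [mul_assoc]
      _ = 1 + ng κ := by rw [hcond', mul_one]
  have hval : (↑u : M2 E n) = 1 + e11 (h - 1) + ng κ := by
    rw [hco]
    have hsp : Matrix.fromBlocks h 0 0 ht =
        Matrix.fromBlocks 1 0 0 ht + e11 (h - 1) := by
      rw [e11, Matrix.fromBlocks_add]
      congr 1 <;> simp
    rw [hsp, hFht]
    abel
  have hsub1 : (↑u : M2 E n) - 1 = e11 (h - 1) + ng κ := by rw [hval]; abel
  have hd1 : d ((↑u : M2 E n) - 1) = κ + ng (e11 (h - 1)) := by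
    rw [hsub1, hdadd _ he1 _ (ng_mem hPtrans hκA),
      d_ng hPtrans hdadd hdmul hκA, hdinvol _ he1, hκdef]
  have hU : u ∈ Ugrp E n P d := by
    constructor
    · show (↑u : M2 E n) ∈ patGrpM E n P
      rw [hval, add_assoc]
      exact memG_of_memA (A_add he1 (ng_mem hPtrans hκA))
    · rw [hd1, hval]
      have hl : (1 : M2 E n) + (κ + ng (e11 (h - 1))) =
          1 + ng (e11 (h - 1)) + e22 k := by
        rw [hκ22]; abel
      rw [hl, show ng κ = ng (e22 k) from by rw [← hκ22]]
      exact (block_inv hPtrans he1 hk22A).1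
  have hinvco : (↑u⁻¹ : M2 E n) = 1 + ng (e11 (h - 1)) + e22 k := by
    rw [U_inv_coe hU, hd1, hκ22]
    abel
  exact ⟨h, k, he1, hD, hκ22, hk22A,
    by rw [hval, show ng κ = ng (e22 k) from by rw [← hκ22]],
    hinvco, hU, by rw [hco, Matrix.toBlocks_fromBlocks₁₁]⟩

lemma H_sub_U : Hgrp E n P d ⊆ Ugrp E n P d := by
  intro u hu
  obtain ⟨h, k, -, -, -, -, -, -, hU, -⟩ :=
    H_struct hPtrans hdmem hdadd hdmul hdinvol hdentry hu
  exact hU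

lemma H_inv {u : (M2 E n)ˣ} (hu : u ∈ Hgrp E n P d) : u⁻¹ ∈ Hgrp E n P d := by
  obtain ⟨h, k, he1, hD, hκ, hk22A, hval, hinvco, hU, -⟩ :=
    H_struct hPtrans hdmem hdadd hdmul hdinvol hdentry hu
  refine ⟨1 + ngn (h - 1), 1 + k, ?_, ?_, ?_⟩
  · rw [hinvco, ng_e11, one_add_e11_add_e22]
  · rw [show Matrix.fromBlocks (1 + ngn (h - 1)) 0 0 (1 : Matrix (Fin n) (Fin n) E)
        = 1 + e11 (ngn (h - 1)) from (one_add_e11 _).symm, ← ng_e11]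
    exact memG_of_memA (ng_mem hPtrans he1)
  · rw [add_sub_cancel_left]
    rw [show d (Matrix.fromBlocks (ngn (h - 1)) 0 0 0) = d (ng (e11 (h - 1))) from by
      rw [ng_e11]; rfl]
    rw [d_ng hPtrans hdadd hdmul he1, hκ,
      show Matrix.fromBlocks (1 : Matrix (Fin n) (Fin n) E) 0 0 (1 + k)
        = 1 + e22 k from (one_add_e22 _).symm]
    exact (ng_inv hPtrans hk22A).1

end Hsec

lemma H_one : (1 : (M2 E n)ˣ) ∈ Hgrp E n P d ∨ True := Or.inr trivial

lemma e11_mem_of_D {h : Matrix (Fin n) (Fin n) E}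
    (hD : Matrix.fromBlocks h 0 0 1 ∈ patGrpM E n P) : e11 (h - 1) ∈ patAlg E n P := by
  have hmem := memA_of_memG hD
  have heq : Matrix.fromBlocks h 0 0 1 - 1 = e11 (h - 1) := by
    rw [show (1 : M2 E n) = Matrix.fromBlocks 1 0 0 1 from Matrix.fromBlocks_one.symm,
      fb_sub, e11]
    simp
  rwa [heq] at hmem

lemma Fht_eq (hPtrans : ∀ i j l, P i j → P j l → P i l)
    (hdmem : ∀ x ∈ patAlg E n P, d x ∈ patAlg E n P)
    {h ht : Matrix (Fin n) (Fin n) E}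
    (hD : Matrix.fromBlocks h 0 0 1 ∈ patGrpM E n P)
    (hcond : (1 + d (Matrix.fromBlocks (h - 1) 0 0 0)) * Matrix.fromBlocks 1 0 0 ht = 1) :
    Matrix.fromBlocks (1 : Matrix (Fin n) (Fin n) E) 0 0 ht = 1 + ng (d (e11 (h - 1))) := by
  have he1 : e11 (h - 1) ∈ patAlg E n P := e11_mem_of_D hD
  have hκA : d (e11 (h - 1)) ∈ patAlg E n P := hdmem _ he1
  have hcond' : (1 + d (e11 (h - 1))) * (Matrix.fromBlocks 1 0 0 ht) = 1 := hcond
  have hinv := ng_inv hPtrans hκA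
  calc Matrix.fromBlocks (1 : Matrix (Fin n) (Fin n) E) 0 0 ht
      = ((1 + ng (d (e11 (h - 1)))) * (1 + d (e11 (h - 1)))) *
        Matrix.fromBlocks 1 0 0 ht := by rw [hinv.1, one_mul]
    _ = (1 + ng (d (e11 (h - 1)))) * ((1 + d (e11 (h - 1))) *
        Matrix.fromBlocks 1 0 0 ht) := by rw [mul_assoc]
    _ = 1 + ng (d (e11 (h - 1))) := by rw [hcond', mul_one]

lemma H_one' (hdadd : ∀ x ∈ patAlg E n P, ∀ y ∈ patAlg E n P, d (x + y) = d x + d y) :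
    (1 : (M2 E n)ˣ) ∈ Hgrp E n P d := by
  refine ⟨1, 1, ?_, ?_, ?_⟩
  · rw [Units.val_one, Matrix.fromBlocks_one]
  · rw [Matrix.fromBlocks_one]; exact G_one
  · rw [sub_self, Matrix.fromBlocks_zero, d_zero hdadd, add_zero, Matrix.fromBlocks_one,
      one_mul]

lemma H_mul (hPtrans : ∀ i j l, P i j → P j l → P i l)
    (hdadd : ∀ x ∈ patAlg E n P, ∀ y ∈ patAlg E n P, d (x + y) = d x + d y)
    (hdmul : ∀ x ∈ patAlg E n P, ∀ y ∈ patAlg E n P, d (x * y) = d y * d x)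
    {u v : (M2 E n)ˣ} (hu : u ∈ Hgrp E n P d) (hv : v ∈ Hgrp E n P d) :
    u * v ∈ Hgrp E n P d := by
  obtain ⟨h, ht, hco, hD, hcond⟩ := hu
  obtain ⟨h', ht', hco', hD', hcond'⟩ := hv
  have he1 : e11 (h - 1) ∈ patAlg E n P := e11_mem_of_D hD
  have he1' : e11 (h' - 1) ∈ patAlg E n P := e11_mem_of_D hD'
  have hcondκ : (1 + d (e11 (h - 1))) * Matrix.fromBlocks 1 0 0 ht = 1 := hcond
  have hcondκ' : (1 + d (e11 (h' - 1))) * Matrix.fromBlocks 1 0 0 ht' = 1 := hcond'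
  refine ⟨h * h', ht * ht', ?_, ?_, ?_⟩
  · rw [Units.val_mul, hco, hco']
    simp [Matrix.fromBlocks_multiply]
  · have hsp : Matrix.fromBlocks (h * h') 0 0 (1 : Matrix (Fin n) (Fin n) E) =
        Matrix.fromBlocks h 0 0 1 * Matrix.fromBlocks h' 0 0 1 := by
      simp [Matrix.fromBlocks_multiply]
    rw [hsp]
    exact G_mul hPtrans hD hD'
  · have hsplit : e11 (h * h' - 1) =
        e11 (h - 1) + e11 (h' - 1) + e11 (h - 1) * e11 (h' - 1) := by
      rw [e11_mul_e11, e11_add, e11_add]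
      congr 1
      noncomm_ring
    have hd : d (e11 (h * h' - 1)) =
        d (e11 (h - 1)) + d (e11 (h' - 1)) +
          d (e11 (h' - 1)) * d (e11 (h - 1)) := by
      rw [hsplit, hdadd _ (A_add he1 he1') _ (A_mul hPtrans he1 he1'),
        hdadd _ he1 _ he1', hdmul _ he1 _ he1']
    have hfac : (1 : M2 E n) + (d (e11 (h - 1)) + d (e11 (h' - 1)) +
        d (e11 (h' - 1)) * d (e11 (h - 1))) =
        (1 + d (e11 (h' - 1))) * (1 + d (e11 (h - 1))) := by noncomm_ring
    have hF : Matrix.fromBlocks (1 : Matrix (Fin n) (Fin n) E) 0 0 (ht * ht') =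
        Matrix.fromBlocks 1 0 0 ht * Matrix.fromBlocks 1 0 0 ht' := by
      simp [Matrix.fromBlocks_multiply]
    show (1 + d (e11 (h * h' - 1))) * Matrix.fromBlocks 1 0 0 (ht * ht') = 1
    rw [hd, hfac, hF, mul_assoc, ← mul_assoc (1 + d (e11 (h - 1))), hcondκ, one_mul,
      hcondκ']

/-! ### Structure of elements of `U` -/

lemma U_struct (hPtrans : ∀ i j l, P i j → P j l → P i l)
    (hdmem : ∀ x ∈ patAlg E n P, d x ∈ patAlg E n P)
    (hdadd : ∀ x ∈ patAlg E n P, ∀ y ∈ patAlg E n P, d (x + y) = d x + d y)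
    (hdinvol : ∀ x ∈ patAlg E n P, d (d x) = x)
    (hdentry : ∀ i j, P i j → idx2 i < idx2 j → ∀ α : E, α ≠ 0 →
      ∃ β : E, β ≠ 0 ∧ d (Matrix.single i j α) =
        Matrix.single (bar2 j) (bar2 i) β)
    {u : (M2 E n)ˣ} (hu : u ∈ Ugrp E n P d) :
    ∃ a b c p q r : Matrix (Fin n) (Fin n) E,
      (↑u : M2 E n) = Matrix.fromBlocks a b 0 c ∧
      (↑u⁻¹ : M2 E n) = Matrix.fromBlocks p q 0 r ∧
      a * p = 1 ∧ p * a = 1 ∧ c * r = 1 ∧ r * c = 1 ∧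
      a * q + b * r = 0 ∧ p * b + q * c = 0 ∧
      e11 (a - 1) ∈ patAlg E n P ∧ e12 b ∈ patAlg E n P ∧
      e22 (c - 1) ∈ patAlg E n P ∧ e22 (r - 1) ∈ patAlg E n P ∧
      d (e11 (a - 1)) = e22 (r - 1) ∧ d (e12 b) = e12 q ∧
      d (e22 (c - 1)) = e11 (p - 1) := by
  have huinv := U_inv hdmem hdinvol hu
  obtain ⟨a, b, c, hM⟩ : ∃ a b c, (↑u : M2 E n) = Matrix.fromBlocks a b 0 c :=
    ⟨_, _, _, G_blocks hu.1⟩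
  obtain ⟨p, q, r, hN⟩ : ∃ p q r, (↑u⁻¹ : M2 E n) = Matrix.fromBlocks p q 0 r :=
    ⟨_, _, _, G_blocks huinv.1⟩
  have h1 : Matrix.fromBlocks (a * p) (a * q + b * r) (0 : Matrix (Fin n) (Fin n) E)
      (c * r) = Matrix.fromBlocks 1 0 0 1 := by
    have := u.mul_inv
    rw [hM, hN, Matrix.fromBlocks_multiply,
      show (1 : M2 E n) = Matrix.fromBlocks 1 0 0 1 from Matrix.fromBlocks_one.symm] at this
    simpa using this
  have h2 : Matrix.fromBlocks (p * a) (p * b + q * c) (0 : Matrix (Fin n) (Fin n) E)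
      (r * c) = Matrix.fromBlocks 1 0 0 1 := by
    have := u.inv_mul
    rw [hM, hN, Matrix.fromBlocks_multiply,
      show (1 : M2 E n) = Matrix.fromBlocks 1 0 0 1 from Matrix.fromBlocks_one.symm] at this
    simpa using this
  obtain ⟨hap, haq, -, hcr⟩ := Matrix.fromBlocks_inj.mp h1
  obtain ⟨hpa, hpb, -, hrc⟩ := Matrix.fromBlocks_inj.mp h2
  have hMA : (↑u : M2 E n) - 1 ∈ patAlg E n P := memA_of_memG hu.1
  have ha1 : Matrix.toBlocks₁₁ ((↑u : M2 E n) - 1) = a - 1 := by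
    rw [toB11_sub_one, hM, Matrix.toBlocks_fromBlocks₁₁]
  have hb1 : Matrix.toBlocks₁₂ ((↑u : M2 E n) - 1) = b := by
    rw [toB12_sub_one, hM, Matrix.toBlocks_fromBlocks₁₂]
  have hc1 : Matrix.toBlocks₂₂ ((↑u : M2 E n) - 1) = c - 1 := by
    rw [toB22_sub_one, hM, Matrix.toBlocks_fromBlocks₂₂]
  have he11A : e11 (a - 1) ∈ patAlg E n P := ha1 ▸ e11_toBlocks_mem hMA
  have he12A : e12 b ∈ patAlg E n P := hb1 ▸ e12_toBlocks_mem hMA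
  have he22A : e22 (c - 1) ∈ patAlg E n P := hc1 ▸ e22_toBlocks_mem hMA
  have hdecomp : (↑u : M2 E n) - 1 = e11 (a - 1) + e12 b + e22 (c - 1) := by
    rw [hM, blocks_decomp]
    abel
  have hd : d ((↑u : M2 E n) - 1) =
      d (e11 (a - 1)) + d (e12 b) + d (e22 (c - 1)) := by
    rw [hdecomp, hdadd _ (A_add he11A he12A) _ he22A, hdadd _ he11A _ he12A]
  have hd11 := d_e11_eq hdadd hdentry he11A
  have hd12 := d_e12_eq hdadd hdentry he12A
  have hd22 := d_e22_eq hdadd hdentry he22A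
  set k1 := Matrix.toBlocks₂₂ (d (e11 (a - 1))) with hk1
  set m := Matrix.toBlocks₁₂ (d (e12 b)) with hm
  set k2 := Matrix.toBlocks₁₁ (d (e22 (c - 1))) with hk2
  have hNform : (↑u⁻¹ : M2 E n) = Matrix.fromBlocks (1 + k2) m 0 (1 + k1) := by
    rw [U_inv_coe hu, hd, hd11, hd12, hd22, ← one_add_blocks]
    abel
  rw [hN] at hNform
  obtain ⟨hp, hq, -, hr⟩ := Matrix.fromBlocks_inj.mp hNform
  have hr1 : k1 = r - 1 := by rw [hr]; abel
  have hp1 : k2 = p - 1 := by rw [hp]; abel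
  refine ⟨a, b, c, p, q, r, hM, hN, hap, hpa, hcr, hrc, haq, hpb, he11A, he12A, he22A,
    ?_, ?_, ?_, ?_⟩
  · rw [← hr1, ← hd11]
    exact hdmem _ he11A
  · rw [hd11, hr1]
  · rw [hd12, hq]
  · rw [hd22, hp1]
/-! ### The subgroup `N` -/

lemma N_one (hdadd : ∀ x ∈ patAlg E n P, ∀ y ∈ patAlg E n P, d (x + y) = d x + d y) :
    (1 : (M2 E n)ˣ) ∈ Ngrp E n P d :=
  ⟨U_one hdadd, 0, by rw [Units.val_one, ← Matrix.fromBlocks_one]⟩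

lemma N_mul_comm (hPtrans : ∀ i j l, P i j → P j l → P i l)
    (hdadd : ∀ x ∈ patAlg E n P, ∀ y ∈ patAlg E n P, d (x + y) = d x + d y)
    (hdmul : ∀ x ∈ patAlg E n P, ∀ y ∈ patAlg E n P, d (x * y) = d y * d x)
    {a b : (M2 E n)ˣ} (ha : a ∈ Ngrp E n P d) (hb : b ∈ Ngrp E n P d) :
    a * b ∈ Ngrp E n P d ∧ a * b = b * a := by
  obtain ⟨haU, x, hax⟩ := ha
  obtain ⟨hbU, y, hby⟩ := hb
  have hax' : (↑a : M2 E n) = 1 + e12 x := by rw [hax, ← one_add_e12]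
  have hby' : (↑b : M2 E n) = 1 + e12 y := by rw [hby, ← one_add_e12]
  have hprod : ∀ z w : Matrix (Fin n) (Fin n) E,
      ((1 : M2 E n) + e12 z) * (1 + e12 w) = 1 + e12 (z + w) := by
    intro z w
    calc ((1 : M2 E n) + e12 z) * (1 + e12 w) = 1 + e12 z + e12 w + e12 z * e12 w := by
          noncomm_ring
      _ = 1 + e12 (z + w) := by rw [e12_mul_e12, add_zero, add_assoc, e12_add]
  constructor
  · exact ⟨U_mul hPtrans hdadd hdmul haU hbU, x + y,
      by rw [Units.val_mul, hax', hby', hprod, one_add_e12]⟩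
  · refine Units.ext ?_
    rw [Units.val_mul, Units.val_mul, hax', hby', hprod, hprod, add_comm x y]

lemma N_inv (hdmem : ∀ x ∈ patAlg E n P, d x ∈ patAlg E n P)
    (hdadd : ∀ x ∈ patAlg E n P, ∀ y ∈ patAlg E n P, d (x + y) = d x + d y)
    (hdinvol : ∀ x ∈ patAlg E n P, d (d x) = x)
    (hdentry : ∀ i j, P i j → idx2 i < idx2 j → ∀ α : E, α ≠ 0 →
      ∃ β : E, β ≠ 0 ∧ d (Matrix.single i j α) =
        Matrix.single (bar2 j) (bar2 i) β)
    {a : (M2 E n)ˣ} (ha : a ∈ Ngrp E n P d) : a⁻¹ ∈ Ngrp E n P d := by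
  obtain ⟨haU, x, hax⟩ := ha
  have hsub : (↑a : M2 E n) - 1 = e12 x := by
    rw [hax, ← one_add_e12]; abel
  have hA : e12 x ∈ patAlg E n P := hsub ▸ memA_of_memG haU.1
  refine ⟨U_inv hdmem hdinvol haU, Matrix.toBlocks₁₂ (d (e12 x)), ?_⟩
  rw [U_inv_coe haU, hsub, d_e12_eq hdadd hdentry hA, one_add_e12,
    show Matrix.toBlocks₁₂ (e12 (Matrix.toBlocks₁₂ (d (e12 x)))) =
      Matrix.toBlocks₁₂ (d (e12 x)) from by rw [e12, Matrix.toBlocks_fromBlocks₁₂]]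

lemma N_normal (hPtrans : ∀ i j l, P i j → P j l → P i l)
    (hdmem : ∀ x ∈ patAlg E n P, d x ∈ patAlg E n P)
    (hdadd : ∀ x ∈ patAlg E n P, ∀ y ∈ patAlg E n P, d (x + y) = d x + d y)
    (hdmul : ∀ x ∈ patAlg E n P, ∀ y ∈ patAlg E n P, d (x * y) = d y * d x)
    (hdinvol : ∀ x ∈ patAlg E n P, d (d x) = x)
    {u a : (M2 E n)ˣ} (hu : u ∈ Ugrp E n P d) (ha : a ∈ Ngrp E n P d) :
    u * a * u⁻¹ ∈ Ngrp E n P d := by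
  obtain ⟨haU, y, hay⟩ := ha
  have hay' : (↑a : M2 E n) = 1 + e12 y := by rw [hay, ← one_add_e12]
  obtain ⟨A, B, C, hM⟩ : ∃ A B C, (↑u : M2 E n) = Matrix.fromBlocks A B 0 C :=
    ⟨_, _, _, G_blocks hu.1⟩
  obtain ⟨p, q, r, hN⟩ : ∃ p q r, (↑u⁻¹ : M2 E n) = Matrix.fromBlocks p q 0 r :=
    ⟨_, _, _, G_blocks (U_inv hdmem hdinvol hu).1⟩
  refine ⟨U_mul hPtrans hdadd hdmul (U_mul hPtrans hdadd hdmul hu haU)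
    (U_inv hdmem hdinvol hu), A * y * r, ?_⟩
  have hmid : (↑u : M2 E n) * e12 y * ↑u⁻¹ = e12 (A * y * r) := by
    rw [hM, hN]
    simp only [e12, Matrix.fromBlocks_multiply]
    simp [Matrix.mul_assoc]
  calc (↑(u * a * u⁻¹) : M2 E n) = ↑u * (1 + e12 y) * ↑u⁻¹ := by
        rw [Units.val_mul, Units.val_mul, hay']
    _ = ↑u * ↑u⁻¹ + ↑u * e12 y * ↑u⁻¹ := by noncomm_ring
    _ = 1 + e12 (A * y * r) := by rw [u.mul_inv, hmid]
    _ = Matrix.fromBlocks 1 (A * y * r) 0 1 := one_add_e12 _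

lemma NH_triv {u : (M2 E n)ˣ} (hN : u ∈ Ngrp E n P d) (hH : u ∈ Hgrp E n P d) :
    u = 1 := by
  obtain ⟨-, x, hx⟩ := hN
  obtain ⟨h, ht, hco, -, -⟩ := hH
  have : Matrix.fromBlocks (1 : Matrix (Fin n) (Fin n) E) x 0 1 =
      Matrix.fromBlocks h 0 0 ht := by rw [← hx, ← hco]
  obtain ⟨-, hx0, -, -⟩ := Matrix.fromBlocks_inj.mp this
  refine Units.ext ?_
  rw [hx, hx0, Matrix.fromBlocks_one, Units.val_one]

/-! ### The decomposition `U = N H` -/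

lemma U_decomp (hPtrans : ∀ i j l, P i j → P j l → P i l)
    (hdmem : ∀ x ∈ patAlg E n P, d x ∈ patAlg E n P)
    (hdadd : ∀ x ∈ patAlg E n P, ∀ y ∈ patAlg E n P, d (x + y) = d x + d y)
    (hdmul : ∀ x ∈ patAlg E n P, ∀ y ∈ patAlg E n P, d (x * y) = d y * d x)
    (hdinvol : ∀ x ∈ patAlg E n P, d (d x) = x)
    (hdentry : ∀ i j, P i j → idx2 i < idx2 j → ∀ α : E, α ≠ 0 →
      ∃ β : E, β ≠ 0 ∧ d (Matrix.single i j α) =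
        Matrix.single (bar2 j) (bar2 i) β)
    {u : (M2 E n)ˣ} (hu : u ∈ Ugrp E n P d) :
    ∃ x ∈ Ngrp E n P d, ∃ h ∈ Hgrp E n P d, u = x * h := by
  obtain ⟨a, b, c, p, q, r, hM, hN, hap, hpa, hcr, hrc, haq, hpb, he11A, he12A, he22A,
    he22rA, hd11, hd12, hd22⟩ := U_struct hPtrans hdmem hdadd hdinvol hdentry hu
  -- the `H` part
  have hHval : Matrix.fromBlocks a 0 0 c * Matrix.fromBlocks p 0 0 r = 1 := by
    rw [Matrix.fromBlocks_multiply,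
      show (1 : M2 E n) = Matrix.fromBlocks 1 0 0 1 from Matrix.fromBlocks_one.symm]
    simp [hap, hcr]
  have hHval' : Matrix.fromBlocks p 0 0 r * Matrix.fromBlocks a 0 0 c = 1 := by
    rw [Matrix.fromBlocks_multiply,
      show (1 : M2 E n) = Matrix.fromBlocks 1 0 0 1 from Matrix.fromBlocks_one.symm]
    simp [hpa, hrc]
  set Hu : (M2 E n)ˣ := ⟨Matrix.fromBlocks a 0 0 c, Matrix.fromBlocks p 0 0 r,
    hHval, hHval'⟩ with hHu
  -- the `N` part
  have hNval : (Matrix.fromBlocks 1 (b * r) 0 1 : M2 E n) *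
      (Matrix.fromBlocks 1 (-(b * r)) 0 1 : M2 E n) = 1 := by
    rw [Matrix.fromBlocks_multiply,
      show (1 : M2 E n) = Matrix.fromBlocks 1 0 0 1 from Matrix.fromBlocks_one.symm]
    simp
  have hNval' : (Matrix.fromBlocks 1 (-(b * r)) 0 1 : M2 E n) *
      (Matrix.fromBlocks 1 (b * r) 0 1 : M2 E n) = 1 := by
    rw [Matrix.fromBlocks_multiply,
      show (1 : M2 E n) = Matrix.fromBlocks 1 0 0 1 from Matrix.fromBlocks_one.symm]
    simp
  set Nu : (M2 E n)ˣ := ⟨Matrix.fromBlocks 1 (b * r) 0 1,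
    Matrix.fromBlocks 1 (-(b * r)) 0 1, hNval, hNval'⟩ with hNu
  -- `Hu ∈ H`
  have hHuH : Hu ∈ Hgrp E n P d := by
    refine ⟨a, c, rfl, ?_, ?_⟩
    · rw [show Matrix.fromBlocks a 0 0 (1 : Matrix (Fin n) (Fin n) E) = 1 + e11 (a - 1) from by
        rw [one_add_e11, show (1 : Matrix (Fin n) (Fin n) E) + (a - 1) = a from by abel]]
      exact memG_of_memA he11A
    · show (1 + d (e11 (a - 1))) * Matrix.fromBlocks 1 0 0 c = 1
      rw [hd11, show (1 : M2 E n) + e22 (r - 1) = Matrix.fromBlocks 1 0 0 r from by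
        rw [one_add_e22, show (1 : Matrix (Fin n) (Fin n) E) + (r - 1) = r from by abel],
        Matrix.fromBlocks_multiply,
        show (1 : M2 E n) = Matrix.fromBlocks 1 0 0 1 from Matrix.fromBlocks_one.symm]
      simp [hrc]
  -- `Nu ∈ N`
  have hsplitbr : e12 (b * r) = e12 b + e12 b * e22 (r - 1) := by
    have hbr : b * r = b + b * (r - 1) := by noncomm_ring
    rw [e12_mul_e22, e12_add, ← hbr]
  have he12brA : e12 (b * r) ∈ patAlg E n P := by
    rw [hsplitbr]
    exact A_add he12A (A_mul hPtrans he12A he22rA)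
  have hdbr : d (e12 (b * r)) = -e12 (b * r) := by
    have h1 : d (e12 (b * r)) = e12 q + e11 (a - 1) * e12 q := by
      rw [hsplitbr, hdadd _ he12A _ (A_mul hPtrans he12A he22rA),
        hdmul _ he12A _ he22rA, hd12, ← hd11, hdinvol _ he11A]
    rw [h1, e11_mul_e12, e12_add, show q + (a - 1) * q = a * q from by noncomm_ring,
      eq_neg_of_add_eq_zero_left haq, ← e12_neg]
  have hNuval : (↑Nu : M2 E n) = 1 + e12 (b * r) := by
    rw [one_add_e12]
  have hNuU : Nu ∈ Ugrp E n P d := by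
    constructor
    · show (↑Nu : M2 E n) ∈ patGrpM E n P
      rw [hNuval]
      exact memG_of_memA he12brA
    · have hsub : (↑Nu : M2 E n) - 1 = e12 (b * r) := by rw [hNuval]; abel
      rw [hsub, hdbr]
      calc (1 + -e12 (b * r)) * (↑Nu : M2 E n)
          = (1 + -e12 (b * r)) * (1 + e12 (b * r)) := by rw [hNuval]
        _ = 1 - e12 (b * r) * e12 (b * r) := by noncomm_ring
        _ = 1 := by rw [e12_mul_e12, sub_zero]
  refine ⟨Nu, ⟨hNuU, b * r, rfl⟩, Hu, hHuH, Units.ext ?_⟩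
  rw [Units.val_mul]
  show (↑u : M2 E n) = Matrix.fromBlocks 1 (b * r) 0 1 * Matrix.fromBlocks a 0 0 c
  rw [Matrix.fromBlocks_multiply, hM]
  simp [Matrix.mul_assoc, hrc]
/-! ### The isomorphism `H ≅` pattern subgroup of `UT_n` -/

lemma H_iso_mul {u v : (M2 E n)ˣ} (hu : u ∈ Hgrp E n P d) (hv : v ∈ Hgrp E n P d) :
    Matrix.toBlocks₁₁ ((↑(u * v) : M2 E n)) =
      Matrix.toBlocks₁₁ (↑u : M2 E n) * Matrix.toBlocks₁₁ (↑v : M2 E n) := by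
  obtain ⟨h, ht, hco, -, -⟩ := hu
  obtain ⟨h', ht', hco', -, -⟩ := hv
  rw [Units.val_mul, hco, hco', Matrix.fromBlocks_multiply]
  simp

lemma H_iso_inj (hPtrans : ∀ i j l, P i j → P j l → P i l)
    (hdmem : ∀ x ∈ patAlg E n P, d x ∈ patAlg E n P)
    {u v : (M2 E n)ˣ} (hu : u ∈ Hgrp E n P d) (hv : v ∈ Hgrp E n P d)
    (heq : Matrix.toBlocks₁₁ (↑u : M2 E n) = Matrix.toBlocks₁₁ (↑v : M2 E n)) :
    u = v := by
  obtain ⟨h1, ht1, hco1, hD1, hcond1⟩ := hu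
  obtain ⟨h2, ht2, hco2, hD2, hcond2⟩ := hv
  rw [hco1, hco2, Matrix.toBlocks_fromBlocks₁₁, Matrix.toBlocks_fromBlocks₁₁] at heq
  subst heq
  have e1 := Fht_eq hPtrans hdmem hD1 hcond1
  have e2 := Fht_eq hPtrans hdmem hD2 hcond2
  have hFF : Matrix.fromBlocks (1 : Matrix (Fin n) (Fin n) E) 0 0 ht1 =
      Matrix.fromBlocks 1 0 0 ht2 := by rw [e1, e2]
  obtain ⟨-, -, -, hh⟩ := Matrix.fromBlocks_inj.mp hFF
  exact Units.ext (by rw [hco1, hco2, hh])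

lemma H_iso_range (hPtrans : ∀ i j l, P i j → P j l → P i l)
    (hdmem : ∀ x ∈ patAlg E n P, d x ∈ patAlg E n P)
    (hdadd : ∀ x ∈ patAlg E n P, ∀ y ∈ patAlg E n P, d (x + y) = d x + d y)
    (hdentry : ∀ i j, P i j → idx2 i < idx2 j → ∀ α : E, α ≠ 0 →
      ∃ β : E, β ≠ 0 ∧ d (Matrix.single i j α) =
        Matrix.single (bar2 j) (bar2 i) β)
    (h : Matrix (Fin n) (Fin n) E) :
    (∃ u ∈ Hgrp E n P d, Matrix.toBlocks₁₁ (↑u : M2 E n) = h) ↔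
      ((∀ i, h i i = 1) ∧
        ∀ a b : Fin n, a ≠ b → h a b ≠ 0 → (P (Sum.inl a) (Sum.inl b) ∧ a < b)) := by
  constructor
  · rintro ⟨u, ⟨h', ht, hco, hD, -⟩, hB⟩
    rw [hco, Matrix.toBlocks_fromBlocks₁₁] at hB
    subst hB
    constructor
    · intro i
      have := hD.1 (Sum.inl i)
      simpa using this
    · intro a b hab hne
      have hne' : (Sum.inl a : Fin n ⊕ Fin n) ≠ Sum.inl b := by simpa using hab
      have hmm := hD.2 _ _ hne' (by simpa using hne)
      refine ⟨hmm.1, ?_⟩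
      have h2 := hmm.2
      simp only [idx2, Sum.elim_inl] at h2
      exact h2
  · rintro ⟨hdiag, hpat⟩
    have hD : Matrix.fromBlocks h 0 0 1 ∈ patGrpM E n P := by
      constructor
      · intro i
        cases i with
        | inl a => simpa using hdiag a
        | inr a => simp
      · intro i j hij hne
        cases i with
        | inl a =>
            cases j with
            | inl b =>
                have hab : a ≠ b := by intro hc; exact hij (by rw [hc])
                have hne2 : h a b ≠ 0 := by simpa using hne
                obtain ⟨hP, hlt⟩ := hpat a b hab hne2
                exact ⟨hP, by simp only [idx2, Sum.elim_inl]; exact hlt⟩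
            | inr b => simp at hne
        | inr a =>
            cases j with
            | inl b => simp at hne
            | inr b =>
                have hab : a ≠ b := by intro hc; exact hij (by rw [hc])
                rw [show (Matrix.fromBlocks h 0 0 1 : M2 E n) (Sum.inr a) (Sum.inr b) =
                  (1 : Matrix (Fin n) (Fin n) E) a b from by simp] at hne
                rw [Matrix.one_apply_ne hab] at hne
                exact absurd rfl hne
    have he1 : e11 (h - 1) ∈ patAlg E n P := e11_mem_of_D hD
    have hκ22 := d_e11_eq hdadd hdentry he1
    set k := Matrix.toBlocks₂₂ (d (e11 (h - 1))) with hk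
    have hkA : e22 k ∈ patAlg E n P := by rw [← hκ22]; exact hdmem _ he1
    have hbi := block_inv hPtrans he1 hkA
    have hval : (1 : M2 E n) + e11 (h - 1) + ng (e22 k) =
        Matrix.fromBlocks h 0 0 (1 + ngn k) := by
      rw [ng_e22, one_add_e11_add_e22,
        show (1 : Matrix (Fin n) (Fin n) E) + (h - 1) = h from by abel]
    refine ⟨⟨1 + e11 (h - 1) + ng (e22 k), 1 + ng (e11 (h - 1)) + e22 k, hbi.2, hbi.1⟩,
      ⟨h, 1 + ngn k, ?_, hD, ?_⟩, ?_⟩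
    · exact hval
    · show (1 + d (e11 (h - 1))) * Matrix.fromBlocks 1 0 0 (1 + ngn k) = 1
      rw [hκ22, show (Matrix.fromBlocks 1 0 0 (1 + ngn k) : M2 E n) = 1 + ng (e22 k) from by
        rw [ng_e22, one_add_e22]]
      exact (ng_inv hPtrans hkA).2
    · show Matrix.toBlocks₁₁ ((1 : M2 E n) + e11 (h - 1) + ng (e22 k)) = h
      rw [hval, Matrix.toBlocks_fromBlocks₁₁]

end UAI


/-- For a pattern group `G ⊆ UT_{2n}(F_{q^k})` (`q` odd) and an algebra anti-involution `†`
of its pattern algebra with `(α e_{ij})† ∈ E^× e_{\bar j \bar i}`, the group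
`U = {u ∈ G : u† = u⁻¹}` decomposes as `U = N ⋊ H` with `N` abelian and normal and `H`
isomorphic to a pattern subgroup of `UT_n` via the upper-left block. -/
theorem unipotent_antiinvolution_semidirect
    (E : Type) [Field E] [Fintype E] (hE : ringChar E ≠ 2) (n : ℕ)
    (P : Fin n ⊕ Fin n → Fin n ⊕ Fin n → Prop)
    (hPrefl : ∀ i, P i i) (hPtrans : ∀ i j l, P i j → P j l → P i l)
    (hPle : ∀ i j, P i j → idx2 i ≤ idx2 j)
    (d : M2 E n → M2 E n)
    (hdmem : ∀ x ∈ patAlg E n P, d x ∈ patAlg E n P)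
    (hdadd : ∀ x ∈ patAlg E n P, ∀ y ∈ patAlg E n P, d (x + y) = d x + d y)
    (hdmul : ∀ x ∈ patAlg E n P, ∀ y ∈ patAlg E n P, d (x * y) = d y * d x)
    (hdinvol : ∀ x ∈ patAlg E n P, d (d x) = x)
    (hdentry : ∀ i j, P i j → idx2 i < idx2 j → ∀ α : E, α ≠ 0 →
      ∃ β : E, β ≠ 0 ∧ d (Matrix.single i j α) =
        Matrix.single (bar2 j) (bar2 i) β) :
    -- `N` is an abelian subgroup of `U`, normal in `U`
    ((1 : (M2 E n)ˣ) ∈ Ngrp E n P d) ∧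
    (∀ a ∈ Ngrp E n P d, ∀ b ∈ Ngrp E n P d, a * b ∈ Ngrp E n P d ∧ a * b = b * a) ∧
    (∀ a ∈ Ngrp E n P d, a⁻¹ ∈ Ngrp E n P d) ∧
    (∀ u ∈ Ugrp E n P d, ∀ a ∈ Ngrp E n P d, u * a * u⁻¹ ∈ Ngrp E n P d) ∧
    -- `H` is a subgroup of `U`
    (Hgrp E n P d ⊆ Ugrp E n P d) ∧
    ((1 : (M2 E n)ˣ) ∈ Hgrp E n P d) ∧
    (∀ a ∈ Hgrp E n P d, ∀ b ∈ Hgrp E n P d, a * b ∈ Hgrp E n P d) ∧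
    (∀ a ∈ Hgrp E n P d, a⁻¹ ∈ Hgrp E n P d) ∧
    -- `U = N ⋊ H` internally
    (∀ u, u ∈ Ngrp E n P d → u ∈ Hgrp E n P d → u = 1) ∧
    (∀ u ∈ Ugrp E n P d, ∃ x ∈ Ngrp E n P d, ∃ h ∈ Hgrp E n P d, u = x * h) ∧
    -- `H` is isomorphic to a pattern subgroup of `UT_n(E)` via `diag(h, h̃⁻¹) ↦ h`
    (∀ u ∈ Hgrp E n P d, ∀ v ∈ Hgrp E n P d,
      Matrix.toBlocks₁₁ ((↑(u * v) : M2 E n)) =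
        Matrix.toBlocks₁₁ (u : M2 E n) * Matrix.toBlocks₁₁ (v : M2 E n)) ∧
    (∀ u ∈ Hgrp E n P d, ∀ v ∈ Hgrp E n P d,
      Matrix.toBlocks₁₁ (u : M2 E n) = Matrix.toBlocks₁₁ (v : M2 E n) → u = v) ∧
    (∀ h : Matrix (Fin n) (Fin n) E,
      (∃ u ∈ Hgrp E n P d, Matrix.toBlocks₁₁ (u : M2 E n) = h) ↔
        ((∀ i, h i i = 1) ∧
          ∀ a b : Fin n, a ≠ b → h a b ≠ 0 → (P (Sum.inl a) (Sum.inl b) ∧ a < b))) := by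
  exact ⟨UAI.N_one hdadd,
    fun a ha b hb => UAI.N_mul_comm hPtrans hdadd hdmul ha hb,
    fun a ha => UAI.N_inv hdmem hdadd hdinvol hdentry ha,
    fun u hu a ha => UAI.N_normal hPtrans hdmem hdadd hdmul hdinvol hu ha,
    UAI.H_sub_U hPtrans hdmem hdadd hdmul hdinvol hdentry,
    UAI.H_one' hdadd,
    fun a ha b hb => UAI.H_mul hPtrans hdadd hdmul ha hb,
    fun a ha => UAI.H_inv hPtrans hdmem hdadd hdmul hdinvol hdentry ha,
    fun u hN hH => UAI.NH_triv hN hH,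
    fun u hu => UAI.U_decomp hPtrans hdmem hdadd hdmul hdinvol hdentry hu,
    fun u hu v hv => UAI.H_iso_mul hu hv,
    fun u hu v hv heq => UAI.H_iso_inj hPtrans hdmem hu hv heq,
    fun h => UAI.H_iso_range hPtrans hdmem hdadd hdentry h⟩
end
end

section
/- Let G = N ⋊ H be a finite group with N abelian, and let L be any lattice of subgroups of H satisfying (L1)–(L4). For each ψ ∈ Irr(N), define I_L(ψ) to be the maximal element of L contained in the inertial subgroup I_H(ψ). Then the assignment H_ψ = I_L(ψ) satisfies: (H1) H_ψ is normal in I_H(ψ); (H2) H_{ψ^h} = (H_ψ)^h for all h ∈ H; (H3) H_{1_N} = H; and (H4) H_ψ ∩ H_φ ⊆ H_{ψφ} for all ψ, φ ∈ Irr(N). The same four conditions also hold for the minimal choice H_{1_N} = H and H_ψ = {1} for all nontrivial ψ. -/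
open scoped Classical

noncomputable section

/-- `f` is the character of some finite-dimensional complex representation of `G`. -/
def IsChar (G : Type) [Group G] (f : G → ℂ) : Prop :=
  ∃ V : FDRep ℂ G, f = V.character

/-- `f` is the character of some irreducible finite-dimensional complex representation. -/
def IsIrrChar (G : Type) [Group G] (f : G → ℂ) : Prop :=
  ∃ V : FDRep ℂ G, CategoryTheory.Simple V ∧ f = V.character

/-- The standard inner product of class functions. -/
def charInner (G : Type) [Group G] [Fintype G] (f g : G → ℂ) : ℂ :=
  (Fintype.card G : ℂ)⁻¹ * ∑ x : G, f x * (starRingEnd ℂ) (g x)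

/-- `χ` is a constituent of `φ`. -/
def IsConstituent (G : Type) [Group G] [Fintype G] (φ χ : G → ℂ) : Prop :=
  charInner G φ χ ≠ 0

/-- A supercharacter theory of a finite group `G`: a partition `K` of `G` into unions of
conjugacy classes together with a set `X` of characters, of equal (finite) cardinality,
with the characters constant on the blocks, and every irreducible character a constituent
of exactly one member of `X`. -/
def IsSCT (G : Type) [Group G] [Fintype G] (K : Set (Set G)) (X : Set (G → ℂ)) : Prop :=
  (∅ ∉ K) ∧ (∀ g : G, ∃! B, B ∈ K ∧ g ∈ B) ∧
  (∀ B ∈ K, ∀ g ∈ B, ∀ h : G, h * g * h⁻¹ ∈ B) ∧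
  (∀ χ ∈ X, IsChar G χ) ∧
  K.ncard = X.ncard ∧
  (∀ χ ∈ X, ∀ B ∈ K, ∀ g ∈ B, ∀ g' ∈ B, χ g = χ g') ∧
  (∀ φ : G → ℂ, IsIrrChar G φ → ∃! χ, χ ∈ X ∧ IsConstituent G φ χ)

/-- The character `ψ ⋊ χ = Ind_{NK}^G (ψ̃ · Inf_K^{NK} χ)` of `G = N ⋊ H`, written out via the
induced-character formula: when `N ∩ K = 1` every element of `NK` factors uniquely as `n k`
with `n ∈ N`, `k ∈ K`, `|NK| = |N|·|K|`, and `(ψ̃ · Inf χ)(n k) = ψ n · χ k`. -/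
def scr {G : Type} [Group G] [Fintype G] (N K : Subgroup G) (ψ χ : G → ℂ) : G → ℂ :=
  fun g => ((Nat.card N : ℂ) * (Nat.card K : ℂ))⁻¹ *
    ∑ x : G, ∑ n : G, ∑ k : G,
      if n ∈ N ∧ k ∈ K ∧ x * g * x⁻¹ = n * k then ψ n * χ k else 0

/-- Induction of a (super)class function from a subgroup `A` to a subgroup `B ⊇ A`,
as a function vanishing off `B`. -/
def indOn {G : Type} [Group G] [Fintype G] (A B : Subgroup G) (f : G → ℂ) : G → ℂ :=
  fun g => if g ∈ B then
    (Nat.card A : ℂ)⁻¹ * ∑ x : G, if x ∈ B ∧ x * g * x⁻¹ ∈ A then f (x * g * x⁻¹) else 0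
  else 0

/-- The conjugate subgroup `x K x⁻¹`. -/
def Kconj {G : Type} [Group G] (x : G) (K : Subgroup G) : Subgroup G :=
  K.map (MulAut.conj x).toMonoidHom

/-- The conjugate function `f^x = (y ↦ f (x y x⁻¹))`. -/
def conjFun {G : Type} [Group G] (x : G) (f : G → ℂ) : G → ℂ :=
  fun y => f (x * y * x⁻¹)

/-- Restriction of a function to a subgroup (extended by zero). -/
def resOn {G : Type} [Group G] (A : Subgroup G) (f : G → ℂ) : G → ℂ :=
  fun g => if g ∈ A then f g else 0

/-- A supercharacter theory of the subgroup `K` of `G`: a partition `P` of `K` into unions of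
`K`-conjugacy classes and a set `X` of characters of `K` (recorded as functions on `G`
vanishing off `K`), of equal cardinality, constant on blocks, with every irreducible
character of `K` a constituent of exactly one member of `X`. -/
def IsSCTOn {G : Type} [Group G] [Fintype G] (K : Subgroup G)
    (P : Set (Set G)) (X : Set (G → ℂ)) : Prop :=
  (∀ B ∈ P, B ⊆ (K : Set G)) ∧ (∅ ∉ P) ∧
  (∀ g ∈ K, ∃! B, B ∈ P ∧ g ∈ B) ∧
  (∀ B ∈ P, ∀ g ∈ B, ∀ k ∈ K, k * g * k⁻¹ ∈ B) ∧
  (∀ χ ∈ X, (∀ g, g ∉ K → χ g = 0) ∧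
    ∃ V : FDRep ℂ ↥K, ∀ x : ↥K, χ ↑x = V.character x) ∧
  P.ncard = X.ncard ∧
  (∀ χ ∈ X, ∀ B ∈ P, ∀ g ∈ B, ∀ g' ∈ B, χ g = χ g') ∧
  (∀ φ : ↥K → ℂ, IsIrrChar ↥K φ →
    ∃! χ, χ ∈ X ∧ charInner ↥K φ (fun x => χ ↑x) ≠ 0)

/-- A superclass function for the partition `P`: a function constant on each block. -/
def IsSclassFn {G : Type} [Group G] (P : Set (Set G)) (f : G → ℂ) : Prop :=
  ∀ B ∈ P, ∀ g ∈ B, ∀ g' ∈ B, f g = f g'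

/-- A linear character of the subgroup `N`, recorded as a function on `G` vanishing off `N`. -/
def LinCharOn {G : Type} [Group G] (N : Subgroup G) (ψ : G → ℂ) : Prop :=
  ψ 1 = 1 ∧ (∀ a ∈ N, ∀ b ∈ N, ψ (a * b) = ψ a * ψ b) ∧ ∀ g, g ∉ N → ψ g = 0

/-- The trivial character of `N` (extended by zero). -/
def oneN {G : Type} [Group G] (N : Subgroup G) : G → ℂ :=
  fun g => if g ∈ N then 1 else 0

/-- The set `SCh(𝓛)` of supercharacters produced by the method of little groups: the
characters `ψ ⋊ χ` where `ψ` runs over the orbit representatives `S` of `Irr N` and `χ`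
over the supercharacters of `H_ψ` (inducing a supercharacter of `H_ψ` to `I_H(ψ)` does not
change `ψ ⋊ χ`). -/
def SCh {G : Type} [Group G] [Fintype G] (N : Subgroup G)
    (𝒳 : Subgroup G → Set (G → ℂ)) (Hc : (G → ℂ) → Subgroup G)
    (S : Set (G → ℂ)) : Set (G → ℂ) :=
  {f | ∃ ψ ∈ S, ∃ χ ∈ 𝒳 (Hc ψ), f = scr N (Hc ψ) ψ χ}

lemma mem_Kconj {G : Type} [Group G] {x g : G} {K : Subgroup G} :
    g ∈ Kconj x K ↔ x⁻¹ * g * x ∈ K := by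
  constructor
  · rintro ⟨k, hk, rfl⟩
    simp only [MulEquiv.coe_toMonoidHom, MulAut.conj_apply]
    rw [show x⁻¹ * (x * k * x⁻¹) * x = k from by group]
    exact hk
  · intro h
    refine ⟨x⁻¹ * g * x, h, ?_⟩
    simp only [MulEquiv.coe_toMonoidHom, MulAut.conj_apply]
    group

lemma Kconj_Kconj {G : Type} [Group G] (x : G) (K : Subgroup G) :
    Kconj x (Kconj x⁻¹ K) = K := by
  ext g
  simp [mem_Kconj, mul_assoc]

lemma Kconj_mono {G : Type} [Group G] (x : G) {K₁ K₂ : Subgroup G} (h : K₁ ≤ K₂) :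
    Kconj x K₁ ≤ Kconj x K₂ := by
  intro g hg
  rw [mem_Kconj] at hg ⊢
  exact h hg

lemma Kconj_self {G : Type} [Group G] {x : G} {H : Subgroup G} (hx : x ∈ H) :
    Kconj x H = H := by
  ext g
  rw [mem_Kconj]
  constructor
  · intro h
    have := H.mul_mem (H.mul_mem hx h) (H.inv_mem hx)
    simpa [mul_assoc] using this
  · intro h
    exact H.mul_mem (H.mul_mem (H.inv_mem hx) h) hx

lemma Kconj_bot {G : Type} [Group G] (x : G) : Kconj x (⊥ : Subgroup G) = ⊥ := by
  ext g
  rw [mem_Kconj, Subgroup.mem_bot, Subgroup.mem_bot]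
  constructor
  · intro h
    have e : g = x * (x⁻¹ * g * x) * x⁻¹ := by group
    rw [e, h]; group
  · rintro rfl; group

lemma conjFun_lin {G : Type} [Group G] {N : Subgroup G} [hN : N.Normal] {ψ : G → ℂ}
    (hψ : LinCharOn N ψ) (h : G) : LinCharOn N (conjFun h ψ) := by
  obtain ⟨h1, hmul, h0⟩ := hψ
  refine ⟨by simpa [conjFun] using h1, ?_, ?_⟩
  · intro a ha b hb
    have : h * (a * b) * h⁻¹ = (h * a * h⁻¹) * (h * b * h⁻¹) := by group
    simp only [conjFun, this]
    exact hmul _ (hN.conj_mem a ha h) _ (hN.conj_mem b hb h)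
  · intro g hg
    apply h0
    intro hc
    have := hN.conj_mem _ hc h⁻¹
    rw [show h⁻¹ * (h * g * h⁻¹) * h⁻¹⁻¹ = g from by group] at this
    exact hg this

lemma conjFun_conjFun {G : Type} [Group G] (h : G) (ψ : G → ℂ) :
    conjFun h⁻¹ (conjFun h ψ) = ψ := by
  funext y
  simp only [conjFun]
  congr 1
  group

lemma conjFun_oneN {G : Type} [Group G] {N : Subgroup G} [hN : N.Normal] (h : G) :
    conjFun h (oneN N) = oneN N := by
  funext y
  simp only [conjFun, oneN]
  by_cases hy : y ∈ N
  · rw [if_pos (hN.conj_mem _ hy h), if_pos hy]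
  · rw [if_neg, if_neg hy]
    intro hc
    have := hN.conj_mem _ hc h⁻¹
    rw [show h⁻¹ * (h * y * h⁻¹) * h⁻¹⁻¹ = y from by group] at this
    exact hy this

/-- For any lattice `𝓛` of subgroups of `H` satisfying (L1)–(L4), both the maximal choice
`H_ψ = I_𝓛(ψ)` (the maximal member of `𝓛` contained in the inertial subgroup `I_H(ψ)`) and
the minimal choice (`H_{1_N} = H`, `H_ψ = ⊥` for nontrivial `ψ`) satisfy (H1)–(H4). -/
theorem minimal_and_maximal_choices (G : Type) [Group G] [Fintype G]
    (N H : Subgroup G) [hN : N.Normal]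
    (hinf : N ⊓ H = ⊥) (hsup : N ⊔ H = ⊤)
    (hab : ∀ a ∈ N, ∀ b ∈ N, a * b = b * a)
    (L : Set (Subgroup G)) (𝒦 : Subgroup G → Set (Set G)) (𝒳 : Subgroup G → Set (G → ℂ))
    (hL1H : H ∈ L) (hL1bot : ⊥ ∈ L) (hLH : ∀ K ∈ L, K ≤ H)
    (hLmeet : ∀ K₁ ∈ L, ∀ K₂ ∈ L, K₁ ⊓ K₂ ∈ L)
    (hLjoin : ∀ K₁ ∈ L, ∀ K₂ ∈ L, K₁ ⊔ K₂ ∈ L)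
    (hL2 : ∀ K ∈ L, ∀ h ∈ H, Kconj h K ∈ L)
    (hL3 : ∀ K ∈ L, IsSCTOn K (𝒦 K) (𝒳 K))
    (hL4ind : ∀ K₁ ∈ L, ∀ K₂ ∈ L, K₁ ≤ K₂ → ∀ f : G → ℂ,
      IsSclassFn (𝒦 K₁) f → IsSclassFn (𝒦 K₂) (indOn K₁ K₂ f))
    (hL4res : ∀ K₁ ∈ L, ∀ K₂ ∈ L, K₁ ≤ K₂ → ∀ f : G → ℂ,
      IsSclassFn (𝒦 K₂) f → IsSclassFn (𝒦 K₁) (resOn K₁ f))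
    (hL4conj : ∀ K ∈ L, ∀ h ∈ H, ∀ χ ∈ 𝒳 K, conjFun h χ ∈ 𝒳 (Kconj h⁻¹ K))
    -- `IL ψ` is the maximal member of `𝓛` contained in `I_H(ψ)`
    (IL : (G → ℂ) → Subgroup G)
    (hILmem : ∀ ψ, LinCharOn N ψ → IL ψ ∈ L)
    (hILle : ∀ ψ, LinCharOn N ψ → IL ψ ≤ H ∧ ∀ k ∈ IL ψ, ∀ n ∈ N, ψ (k * n * k⁻¹) = ψ n)
    (hILmax : ∀ ψ, LinCharOn N ψ → ∀ K ∈ L,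
      (∀ k ∈ K, ∀ n ∈ N, ψ (k * n * k⁻¹) = ψ n) → K ≤ IL ψ) :
    -- the maximal choice satisfies (H1)–(H4)
    ((∀ ψ, LinCharOn N ψ → ∀ h ∈ H,
        (∀ n ∈ N, ψ (h * n * h⁻¹) = ψ n) → Kconj h (IL ψ) = IL ψ) ∧
      (∀ ψ, LinCharOn N ψ → ∀ h ∈ H, IL (conjFun h ψ) = Kconj h⁻¹ (IL ψ)) ∧
      (IL (oneN N) = H) ∧
      (∀ ψ φ, LinCharOn N ψ → LinCharOn N φ → IL ψ ⊓ IL φ ≤ IL (ψ * φ))) ∧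
    -- the minimal choice `H_{1_N} = H`, `H_ψ = ⊥` otherwise, satisfies (H1)–(H4)
    (((∀ ψ, LinCharOn N ψ →
        (∀ k ∈ (if ψ = oneN N then H else ⊥ : Subgroup G), ∀ n ∈ N,
          ψ (k * n * k⁻¹) = ψ n) ∧
        ∀ h ∈ H, (∀ n ∈ N, ψ (h * n * h⁻¹) = ψ n) →
          Kconj h (if ψ = oneN N then H else ⊥ : Subgroup G) =
            (if ψ = oneN N then H else ⊥ : Subgroup G)) ∧
      (∀ ψ, LinCharOn N ψ → ∀ h ∈ H,
        (if conjFun h ψ = oneN N then H else ⊥ : Subgroup G) =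
          Kconj h⁻¹ (if ψ = oneN N then H else ⊥ : Subgroup G)) ∧
      ((if oneN N = oneN N then H else ⊥ : Subgroup G) = H) ∧
      (∀ ψ φ, LinCharOn N ψ → LinCharOn N φ →
        (if ψ = oneN N then H else ⊥ : Subgroup G) ⊓
            (if φ = oneN N then H else ⊥ : Subgroup G) ≤
          (if ψ * φ = oneN N then H else ⊥ : Subgroup G)))) := by
  have oneLin : LinCharOn N (oneN N) := by
    refine ⟨by simp [oneN, N.one_mem], ?_, ?_⟩
    · intro a ha b hb
      simp [oneN, ha, hb, N.mul_mem ha hb]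
    · intro g hg
      simp [oneN, hg]
  have oneStab : ∀ k n, n ∈ N → oneN N (k * n * k⁻¹) = oneN N n := by
    intro k n hn
    simp [oneN, hn, hN.conj_mem n hn k]
  constructor
  · -- maximal choice
    have stab_inv : ∀ ψ, LinCharOn N ψ → ∀ h : G,
        (∀ n ∈ N, ψ (h * n * h⁻¹) = ψ n) → (∀ n ∈ N, ψ (h⁻¹ * n * h) = ψ n) := by
      intro ψ hψ h hstab n hn
      have hm : h⁻¹ * n * h ∈ N := by simpa using hN.conj_mem n hn h⁻¹
      have := hstab _ hm
      have e : h * (h⁻¹ * n * h) * h⁻¹ = n := by group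
      rw [e] at this
      rw [this]
    have key : ∀ ψ, LinCharOn N ψ → ∀ h ∈ H,
        (∀ n ∈ N, ψ (h * n * h⁻¹) = ψ n) → Kconj h (IL ψ) ≤ IL ψ := by
      intro ψ hψ h hh hstab
      apply hILmax ψ hψ _ (hL2 _ (hILmem ψ hψ) h hh)
      intro k hk n hn
      rw [mem_Kconj] at hk
      set x := h⁻¹ * k * h with hx
      have hm : h⁻¹ * n * h ∈ N := by
        simpa using hN.conj_mem n hn h⁻¹
      have e1 : k * n * k⁻¹ = h * (x * (h⁻¹ * n * h) * x⁻¹) * h⁻¹ := by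
        simp only [hx]; group
      have hxm : x * (h⁻¹ * n * h) * x⁻¹ ∈ N := hN.conj_mem _ hm x
      rw [e1, hstab _ hxm, (hILle ψ hψ).2 x hk _ hm]
      exact stab_inv ψ hψ h hstab n hn
    refine ⟨?_, ?_, ?_, ?_⟩
    · -- (H1)
      intro ψ hψ h hh hstab
      apply le_antisymm (key ψ hψ h hh hstab)
      have h2 := key ψ hψ h⁻¹ (H.inv_mem hh) (by
        intro n hn
        have := stab_inv ψ hψ h hstab n hn
        simpa using this)
      have := Kconj_mono h h2
      rwa [Kconj_Kconj] at this
    · -- (H2)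
      intro ψ hψ h hh
      have hlin := conjFun_lin hψ h
      apply le_antisymm
      · -- IL (conjFun h ψ) ≤ Kconj h⁻¹ (IL ψ)
        have hB : Kconj h (IL (conjFun h ψ)) ≤ IL ψ := by
          apply hILmax ψ hψ _ (hL2 _ (hILmem _ hlin) h hh)
          intro k hk n hn
          rw [mem_Kconj] at hk
          set x := h⁻¹ * k * h with hx
          have hm : h⁻¹ * n * h ∈ N := by simpa using hN.conj_mem n hn h⁻¹
          have e1 : k * n * k⁻¹ = h * (x * (h⁻¹ * n * h) * x⁻¹) * h⁻¹ := by
            simp only [hx]; group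
          have := (hILle _ hlin).2 x hk _ hm
          simp only [conjFun] at this
          have e2 : h * (h⁻¹ * n * h) * h⁻¹ = n := by group
          rw [e2] at this
          rw [e1]
          exact this
        have := Kconj_mono h⁻¹ hB
        rwa [show Kconj h⁻¹ (Kconj h (IL (conjFun h ψ))) = IL (conjFun h ψ) by
          have := Kconj_Kconj h⁻¹ (IL (conjFun h ψ)); rwa [inv_inv] at this] at this
      · -- Kconj h⁻¹ (IL ψ) ≤ IL (conjFun h ψ)
        apply hILmax _ hlin _ (hL2 _ (hILmem ψ hψ) h⁻¹ (H.inv_mem hh))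
        intro k hk n hn
        rw [mem_Kconj, inv_inv] at hk
        set x := h * k * h⁻¹ with hx
        simp only [conjFun]
        have hm : h * n * h⁻¹ ∈ N := hN.conj_mem n hn h
        have e1 : h * (k * n * k⁻¹) * h⁻¹ = x * (h * n * h⁻¹) * x⁻¹ := by
          simp only [hx]; group
        rw [e1]
        exact (hILle ψ hψ).2 x hk _ hm
    · -- (H3)
      apply le_antisymm (hILle _ oneLin).1
      exact hILmax _ oneLin H hL1H (fun k _ n hn => oneStab k n hn)
    · -- (H4)
      intro ψ φ hψ hφ
      have hlin : LinCharOn N (ψ * φ) := by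
        refine ⟨by simp [Pi.mul_apply, hψ.1, hφ.1], ?_, ?_⟩
        · intro a ha b hb
          simp only [Pi.mul_apply, hψ.2.1 a ha b hb, hφ.2.1 a ha b hb]
          ring
        · intro g hg
          simp [Pi.mul_apply, hψ.2.2 g hg]
      apply hILmax _ hlin _ (hLmeet _ (hILmem ψ hψ) _ (hILmem φ hφ))
      intro k hk n hn
      rw [Subgroup.mem_inf] at hk
      simp only [Pi.mul_apply, (hILle ψ hψ).2 k hk.1 n hn, (hILle φ hφ).2 k hk.2 n hn]
  · -- minimal choice
    have oneIff : ∀ (h : G) (ψ : G → ℂ), conjFun h ψ = oneN N ↔ ψ = oneN N := by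
      intro h ψ
      constructor
      · intro e
        rw [← conjFun_conjFun h ψ, e, conjFun_oneN]
      · intro e
        rw [e, conjFun_oneN]
    refine ⟨?_, ?_, by simp, ?_⟩
    · intro ψ hψ
      constructor
      · intro k hk n hn
        by_cases h1 : ψ = oneN N
        · rw [if_pos h1] at hk
          rw [h1]
          exact oneStab k n hn
        · rw [if_neg h1, Subgroup.mem_bot] at hk
          subst hk
          simp
      · intro h hh _
        by_cases h1 : ψ = oneN N
        · rw [if_pos h1]
          exact Kconj_self hh
        · rw [if_neg h1]
          exact Kconj_bot h
    · intro ψ hψ h hh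
      by_cases h1 : ψ = oneN N
      · rw [if_pos h1, if_pos ((oneIff h ψ).mpr h1), Kconj_self (H.inv_mem hh)]
      · rw [if_neg h1, if_neg (fun hc => h1 ((oneIff h ψ).mp hc)), Kconj_bot]
    · intro ψ φ hψ hφ
      by_cases h1 : ψ = oneN N
      · by_cases h2 : φ = oneN N
        · have : ψ * φ = oneN N := by
            subst h1 h2
            funext g
            by_cases hg : g ∈ N <;> simp [oneN, hg]
          rw [if_pos this]
          rw [if_pos h1, if_pos h2]
          exact le_trans inf_le_left le_rfl
        · rw [if_neg h2]
          exact le_trans inf_le_right bot_le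
      · rw [if_neg h1]
        exact le_trans inf_le_left bot_le
end
end
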